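/- arXiv:1910.06728 — 7 statements merged into one kernel-verified Lean document; each statement's English description precedes it below -/
import Mathlib

section
/- Let U be an r-dimensional linear subspace of the polynomial ring ℝ[x]. Then the linear span of all products pq with p, q ∈ U has dimension at least 2r − 1. -/
open Polynomial

/-- Nonzero real polynomials with strictly increasing degrees are linearly independent. -/
lemma linearIndependent_of_natDegree_strictMono {n : ℕ} (p : Fin n → Polynomial ℝ)
    (h0 : ∀ i, p i ≠ 0) (hmono : StrictMono fun i => (p i).natDegree) :
    LinearIndependent ℝ p := by
  induction n with
  | zero => exact linearIndependent_empty_type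
  | succ n ih =>
    have hp : p = Fin.snoc (fun i : Fin n => p i.castSucc) (p (Fin.last n)) := by
      funext i
      induction i using Fin.lastCases with
      | last => simp
      | cast i => simp
    rw [hp, linearIndependent_fin_snoc]
    refine ⟨ih _ (fun i => h0 _)
      (fun i j hij => hmono (by simpa using hij)), ?_⟩
    intro hmem
    set N := (p (Fin.last n)).natDegree with hN
    have hsub : Set.range (fun i : Fin n => p i.castSucc) ⊆
        (degreeLT ℝ N : Submodule ℝ (Polynomial ℝ)) := by
      rintro _ ⟨i, rfl⟩
      rw [SetLike.mem_coe, mem_degreeLT]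
      have h1 : (p i.castSucc).natDegree < N := hmono (Fin.castSucc_lt_last i)
      calc (p i.castSucc).degree ≤ ((p i.castSucc).natDegree : WithBot ℕ) :=
            degree_le_natDegree
        _ < (N : WithBot ℕ) := by exact_mod_cast h1
    have hmem' := Submodule.span_le.mpr hsub hmem
    rw [mem_degreeLT, degree_eq_natDegree (h0 _), ← hN] at hmem'
    exact absurd hmem' (by exact_mod_cast lt_irrefl N)

/-- If `U` is an `r`-dimensional subspace of `ℝ[x]`, then the span of all
products `p * q` with `p, q ∈ U` has dimension at least `2r - 1`. -/
theorem dim_products_ge_two_r_sub_one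
    (U : Submodule ℝ (Polynomial ℝ)) [FiniteDimensional ℝ U] (r : ℕ)
    (hU : Module.finrank ℝ U = r) :
    2 * r - 1 ≤ Module.finrank ℝ
      (Submodule.span ℝ {f : Polynomial ℝ | ∃ p ∈ U, ∃ q ∈ U, f = p * q}) := by
  classical
  set W := Submodule.span ℝ {f : Polynomial ℝ | ∃ p ∈ U, ∃ q ∈ U, f = p * q} with hWdef
  -- Degrees in `U` are bounded by some `N`.
  obtain ⟨s, hs⟩ := (Submodule.fg_iff_finiteDimensional U).mpr ‹_›
  obtain ⟨N, hN⟩ := span_le_degreeLE_of_finite (s.finite_toSet)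
  rw [hs] at hN
  have hUdeg : ∀ p ∈ U, p.degree ≤ (N : WithBot ℕ) := fun p hp => mem_degreeLE.mp (hN hp)
  -- `W` is finite-dimensional.
  have hWle : W ≤ degreeLE ℝ ((N + N : ℕ) : WithBot ℕ) := by
    rw [hWdef]
    apply Submodule.span_le.mpr
    rintro f ⟨p, hp, q, hq, rfl⟩
    rw [SetLike.mem_coe, mem_degreeLE]
    calc (p * q).degree ≤ p.degree + q.degree := degree_mul_le p q
      _ ≤ (N : WithBot ℕ) + (N : WithBot ℕ) := add_le_add (hUdeg p hp) (hUdeg q hq)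
      _ = ((N + N : ℕ) : WithBot ℕ) := by push_cast; rfl
  haveI hfd : FiniteDimensional ℝ (degreeLE ℝ ((N + N : ℕ) : WithBot ℕ)) := by
    rw [← degreeLT_succ_eq_degreeLE]
    exact (degreeLTEquiv ℝ (N + N + 1)).symm.finiteDimensional
  haveI : FiniteDimensional ℝ W := Submodule.finiteDimensional_of_le hWle
  -- The set of degrees occurring in `U`.
  set S : Set ℕ := Polynomial.natDegree '' {p : Polynomial ℝ | p ∈ U ∧ p ≠ 0} with hSdef
  have hSfin : S.Finite := by
    apply Set.Finite.subset (Set.finite_Iic N)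
    rintro _ ⟨p, ⟨hp, hp0⟩, rfl⟩
    exact natDegree_le_iff_degree_le.mpr (hUdeg p hp)
  -- Pick a representative polynomial of each degree in `S`.
  have hrep : ∀ d : ℕ, ∃ p : Polynomial ℝ, d ∈ S → p ∈ U ∧ p ≠ 0 ∧ p.natDegree = d := by
    intro d
    by_cases hd : d ∈ S
    · obtain ⟨p, ⟨hp, hp0⟩, rfl⟩ := hd
      exact ⟨p, fun _ => ⟨hp, hp0, rfl⟩⟩
    · exact ⟨0, fun h => absurd h hd⟩
  choose g hg using hrep
  -- The representatives span `U` (strong induction on degree).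
  have key : ∀ n : ℕ, ∀ p ∈ U, p.natDegree = n → p ∈ Submodule.span ℝ (g '' S) := by
    intro n
    induction n using Nat.strong_induction_on with
    | _ n ih =>
      intro p hp hdeg
      by_cases hp0 : p = 0
      · simp [hp0]
      · have hdS : p.natDegree ∈ S := ⟨p, ⟨hp, hp0⟩, rfl⟩
        obtain ⟨hqU, hq0, hqd⟩ := hg _ hdS
        set c : ℝ := p.leadingCoeff / (g p.natDegree).leadingCoeff with hc
        have hlq : (g p.natDegree).leadingCoeff ≠ 0 := leadingCoeff_ne_zero.mpr hq0
        have hlp : p.leadingCoeff ≠ 0 := leadingCoeff_ne_zero.mpr hp0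
        have hc0 : c ≠ 0 := div_ne_zero hlp hlq
        have hsmul : c • g p.natDegree = C c * g p.natDegree := smul_eq_C_mul c
        have hdegeq : p.degree = (c • g p.natDegree).degree := by
          rw [hsmul, degree_mul, degree_C hc0, zero_add,
            degree_eq_natDegree hp0, degree_eq_natDegree hq0, hqd]
        have hlceq : p.leadingCoeff = (c • g p.natDegree).leadingCoeff := by
          rw [hsmul, leadingCoeff_mul, leadingCoeff_C, hc]
          field_simp
        have hq' : c • g p.natDegree ∈ Submodule.span ℝ (g '' S) :=
          Submodule.smul_mem _ _ (Submodule.subset_span ⟨_, hdS, rfl⟩)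
        by_cases hp'0 : p - c • g p.natDegree = 0
        · have : p = c • g p.natDegree := by rwa [sub_eq_zero] at hp'0
          rw [this]; exact hq'
        · have hdlt : (p - c • g p.natDegree).degree < p.degree :=
            degree_sub_lt hdegeq hp0 hlceq
          have hnlt : (p - c • g p.natDegree).natDegree < n :=
            hdeg ▸ natDegree_lt_natDegree hp'0 hdlt
          have hmem := ih _ hnlt (p - c • g p.natDegree)
            (Submodule.sub_mem U hp (Submodule.smul_mem _ _ hqU)) rfl
          have hpe : p = (p - c • g p.natDegree) + c • g p.natDegree := by ring
          rw [hpe]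
          exact Submodule.add_mem _ hmem hq'
  have hUspan : U ≤ Submodule.span ℝ (g '' S) := fun p hp => key _ p hp rfl
  -- Hence `S` has at least `r` elements.
  set F : Finset ℕ := hSfin.toFinset with hF
  have himg : g '' S = ↑(F.image g) := by
    rw [Finset.coe_image, hF, Set.Finite.coe_toFinset]
  have hcard : r ≤ F.card := by
    calc r = Module.finrank ℝ U := hU.symm
      _ ≤ Module.finrank ℝ (Submodule.span ℝ ((F.image g : Finset (Polynomial ℝ)) :
            Set (Polynomial ℝ))) := Submodule.finrank_mono (himg ▸ hUspan)
      _ ≤ (F.image g).card := finrank_span_finset_le_card _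
      _ ≤ F.card := Finset.card_image_le
  -- Dispose of the trivial case `r = 0`.
  cases r with
  | zero => simp
  | succ m =>
  -- Pick `m+1` degrees `d 0 < d 1 < ... < d m` from `S`.
  obtain ⟨t, htF, htcard⟩ := Finset.exists_subset_card_eq hcard
  set d : Fin (m + 1) → ℕ := fun i => ((t.orderIsoOfFin htcard) i : ℕ) with hd_def
  have hdmono : StrictMono d := fun i j hij => by
    exact_mod_cast Subtype.coe_lt_coe.mpr ((t.orderIsoOfFin htcard).strictMono hij)
  have hdS : ∀ i, d i ∈ S := by
    intro i
    have h1 : d i ∈ t := ((t.orderIsoOfFin htcard) i).2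
    have h2 : d i ∈ F := htF h1
    rwa [hF, Set.Finite.mem_toFinset] at h2
  set q : Fin (m + 1) → Polynomial ℝ := fun i => g (d i) with hq_def
  have hqU : ∀ i, q i ∈ U := fun i => (hg _ (hdS i)).1
  have hq0 : ∀ i, q i ≠ 0 := fun i => (hg _ (hdS i)).2.1
  have hqdeg : ∀ i, (q i).natDegree = d i := fun i => (hg _ (hdS i)).2.2
  -- The `2m+1` products with strictly increasing degrees.
  set e : Fin (2 * m + 1) → Polynomial ℝ := fun i =>
    if h : (i : ℕ) ≤ m then q 0 * q ⟨(i : ℕ), by omega⟩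
    else q ⟨(i : ℕ) - m, by omega⟩ * q (Fin.last m) with he_def
  have he0 : ∀ i, e i ≠ 0 := by
    intro i
    rw [he_def]
    dsimp only
    split <;> exact mul_ne_zero (hq0 _) (hq0 _)
  have hedeg : ∀ i : Fin (2 * m + 1), (e i).natDegree =
      if h : (i : ℕ) ≤ m then d 0 + d ⟨(i : ℕ), by omega⟩
      else d ⟨(i : ℕ) - m, by omega⟩ + d (Fin.last m) := by
    intro i
    rw [he_def]
    dsimp only
    split <;> rw [natDegree_mul (hq0 _) (hq0 _), hqdeg, hqdeg]
  have hemono : StrictMono fun i => (e i).natDegree := by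
    intro i j hij
    have hij' : (i : ℕ) < (j : ℕ) := hij
    simp only [hedeg]
    by_cases hi : (i : ℕ) ≤ m <;> by_cases hj : (j : ℕ) ≤ m
    · rw [dif_pos hi, dif_pos hj]
      exact Nat.add_lt_add_left (hdmono (Fin.mk_lt_mk.mpr hij')) _
    · rw [dif_pos hi, dif_neg hj]
      refine Nat.add_lt_add_of_lt_of_le ?_ ?_
      · exact hdmono (by simp only [Fin.lt_def, Fin.val_zero]; omega)
      · exact hdmono.monotone (Fin.le_last _)
    · omega
    · rw [dif_neg hi, dif_neg hj]
      exact Nat.add_lt_add_right (hdmono (by simp only [Fin.mk_lt_mk]; omega)) _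
  have heW : ∀ i, e i ∈ W := by
    intro i
    apply Submodule.subset_span
    rw [he_def]
    dsimp only
    split
    · exact ⟨q 0, hqU 0, q _, hqU _, rfl⟩
    · exact ⟨q _, hqU _, q (Fin.last m), hqU _, rfl⟩
  have hli := linearIndependent_of_natDegree_strictMono e he0 hemono
  have hspanW : Submodule.span ℝ (Set.range e) ≤ W := by
    apply Submodule.span_le.mpr
    rintro _ ⟨i, rfl⟩
    exact heW i
  calc 2 * (m + 1) - 1 = Fintype.card (Fin (2 * m + 1)) := by simp; omega
    _ = Module.finrank ℝ (Submodule.span ℝ (Set.range e)) :=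
        (finrank_span_eq_card hli).symm
    _ ≤ Module.finrank ℝ W := Submodule.finrank_mono hspanW
end

section
/- Let U be an r-dimensional complex linear subspace of ℂ[x]. Then the linear span of all products pq with p, q ∈ U has complex dimension at least 2r − 1. -/
open Polynomial Module Submodule

/-- Polynomials with strictly increasing `natDegree` (all nonzero) are linearly independent. -/
lemma li_of_strictMono_natDegree : ∀ {n : ℕ} (p : Fin n → Polynomial ℂ),
    (∀ i, p i ≠ 0) → (StrictMono fun i => (p i).natDegree) → LinearIndependent ℂ p := by
  intro n
  induction n with
  | zero => intro p _ _; exact linearIndependent_empty_type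
  | succ n ih =>
    intro p h0 hm
    rw [linearIndependent_fin_succ']
    refine ⟨ih _ (fun i => h0 _)
      (fun i j hij => hm (Fin.castSucc_lt_castSucc_iff.mpr hij)), ?_⟩
    intro hmem
    set d := (p (Fin.last n)).natDegree with hd
    have hspan : Submodule.span ℂ (Set.range (Fin.init p)) ≤ degreeLT ℂ d := by
      rw [Submodule.span_le]
      rintro _ ⟨i, rfl⟩
      rw [SetLike.mem_coe, mem_degreeLT]
      have h1 : (Fin.init p i).natDegree < d := hm (Fin.castSucc_lt_last i)
      calc (Fin.init p i).degree ≤ ((Fin.init p i).natDegree : WithBot ℕ) := degree_le_natDegree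
        _ < (d : WithBot ℕ) := by exact_mod_cast h1
    have h2 := mem_degreeLT.1 (hspan hmem)
    rw [degree_eq_natDegree (h0 _)] at h2
    exact absurd h2 (by exact_mod_cast lt_irrefl d)

/-- A finite-dimensional subspace of polynomials has bounded degree. -/
lemma sub_le_degreeLE (U : Submodule ℂ (Polynomial ℂ)) [FiniteDimensional ℂ U] :
    ∃ N : ℕ, U ≤ degreeLE ℂ (N : WithBot ℕ) := by
  have hfg : U.FG := (Submodule.fg_top U).mp (Module.finite_def.mp inferInstance)
  obtain ⟨s, hs⟩ := hfg
  refine ⟨s.sup natDegree, ?_⟩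
  rw [← hs, Submodule.span_le]
  intro x hx
  rw [SetLike.mem_coe, mem_degreeLE]
  calc x.degree ≤ (x.natDegree : WithBot ℕ) := degree_le_natDegree
    _ ≤ _ := by exact_mod_cast Finset.le_sup hx

/-- Every `r`-dimensional subspace of `ℂ[x]` has a family of `r` nonzero members with
strictly increasing degrees. -/
lemma exists_chain : ∀ (r : ℕ) (U : Submodule ℂ (Polynomial ℂ)), FiniteDimensional ℂ U →
    finrank ℂ U = r →
    ∃ q : Fin r → Polynomial ℂ, (∀ i, q i ∈ U) ∧ (∀ i, q i ≠ 0) ∧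
      StrictMono fun i => (q i).natDegree := by
  intro r
  induction r with
  | zero =>
    intro U _ _
    exact ⟨fun i => i.elim0, fun i => i.elim0, fun i => i.elim0, fun i j _ => i.elim0⟩
  | succ r ih =>
    intro U hFD hr
    -- the set of degrees of nonzero elements of U
    set S : Set ℕ := {d : ℕ | ∃ u ∈ U, u ≠ 0 ∧ u.natDegree = d} with hS
    have hUne : U ≠ ⊥ := by
      intro h
      rw [h] at hr
      simp [finrank_bot] at hr
    obtain ⟨u0, hu0U, hu00⟩ := Submodule.exists_mem_ne_zero_of_ne_bot hUne
    have hSne : S.Nonempty := ⟨u0.natDegree, u0, hu0U, hu00, rfl⟩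
    obtain ⟨N, hN⟩ := sub_le_degreeLE U
    have hSbdd : BddAbove S := by
      refine ⟨N, ?_⟩
      rintro d ⟨u, huU, hu0, rfl⟩
      have := mem_degreeLE.1 (hN huU)
      exact natDegree_le_iff_degree_le.mpr this
    set d := sSup S with hdS
    obtain ⟨q, hqU, hq0, hqd⟩ := Nat.sSup_mem hSne hSbdd
    have hmax : ∀ u ∈ U, u ≠ 0 → u.natDegree ≤ d := fun u hu h0 =>
      le_csSup hSbdd ⟨u, hu, h0, rfl⟩
    rw [← hdS] at hqd
    have hqc : q.coeff d ≠ 0 := by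
      rw [← hqd, coeff_natDegree]
      exact leadingCoeff_ne_zero.mpr hq0
    set W := U ⊓ degreeLT ℂ d with hW
    have hWU : W ≤ U := inf_le_left
    have hUeq : U = W ⊔ Submodule.span ℂ {q} := by
      apply le_antisymm
      · intro u hu
        set c := u.coeff d / q.coeff d with hc
        have h1 : u - c • q ∈ W := by
          refine Submodule.mem_inf.2 ⟨sub_mem hu (Submodule.smul_mem _ _ hqU), ?_⟩
          rw [mem_degreeLT]
          rw [degree_lt_iff_coeff_zero]
          intro m hm
          rw [coeff_sub, coeff_smul, smul_eq_mul]
          rcases eq_or_lt_of_le hm with h | h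
          · have hmd : m = d := by exact_mod_cast h.symm
            rw [hmd, hc, div_mul_cancel₀ _ hqc, sub_self]
          · have hdm : d < m := by exact_mod_cast h
            have hum : u.coeff m = 0 := by
              by_cases hu0 : u = 0
              · simp [hu0]
              · exact coeff_eq_zero_of_natDegree_lt (lt_of_le_of_lt (hmax u hu hu0) hdm)
            have hqm : q.coeff m = 0 :=
              coeff_eq_zero_of_natDegree_lt (by rw [hqd]; exact hdm)
            rw [hum, hqm, mul_zero, sub_zero]
        have : u = (u - c • q) + c • q := by ring
        rw [this]
        exact add_mem (Submodule.mem_sup_left h1)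
          (Submodule.mem_sup_right (Submodule.smul_mem _ _ (Submodule.subset_span rfl)))
      · exact sup_le hWU ((Submodule.span_le).2 (Set.singleton_subset_iff.2 hqU))
    have hinf : W ⊓ Submodule.span ℂ {q} = ⊥ := by
      rw [eq_bot_iff]
      rintro x ⟨hxW, hxs⟩
      obtain ⟨c, rfl⟩ := Submodule.mem_span_singleton.1 hxs
      rcases eq_or_ne c 0 with rfl | hc0
      · simp
      · exfalso
        have hx0 : c • q ≠ 0 := smul_ne_zero hc0 hq0
        have hdeg : (c • q).degree = (d : WithBot ℕ) := by
          rw [Polynomial.smul_eq_C_mul, degree_C_mul hc0, degree_eq_natDegree hq0, hqd]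
        have := mem_degreeLT.1 hxW.2
        rw [hdeg] at this
        exact absurd this (lt_irrefl _)
    haveI : FiniteDimensional ℂ W := Submodule.finiteDimensional_of_le hWU
    have hfrW : finrank ℂ W = r := by
      have h3 := Submodule.finrank_sup_add_finrank_inf_eq W (Submodule.span ℂ {q})
      rw [hinf, finrank_bot, finrank_span_singleton hq0, ← hUeq, hr] at h3
      omega
    obtain ⟨q', hq'W, hq'0, hq'm⟩ := ih W inferInstance hfrW
    have hq'lt : ∀ i, (q' i).natDegree < d := fun i => by
      have := mem_degreeLT.1 (Submodule.mem_inf.1 (hq'W i)).2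
      exact (natDegree_lt_iff_degree_lt (hq'0 i)).mpr this
    refine ⟨fun i => if h : (i : ℕ) < r then q' ⟨i, h⟩ else q, ?_, ?_, ?_⟩
    · intro i
      dsimp only
      split
      · exact hWU (hq'W _)
      · exact hqU
    · intro i
      dsimp only
      split
      · exact hq'0 _
      · exact hq0
    · intro i j hij
      have hij' : (i : ℕ) < (j : ℕ) := hij
      dsimp only
      rcases Nat.lt_or_ge (i : ℕ) r with hi | hi <;>
        rcases Nat.lt_or_ge (j : ℕ) r with hj | hj
      · rw [dif_pos hi, dif_pos hj]
        exact hq'm (show (⟨(i:ℕ), hi⟩ : Fin r) < ⟨(j:ℕ), hj⟩ from hij')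
      · rw [dif_pos hi, dif_neg (by omega), hqd]
        exact hq'lt _
      · omega
      · have := j.isLt; omega

/-- If `U` is an `r`-dimensional subspace of `ℂ[x]`, then the span of all
products `p * q` with `p, q ∈ U` has dimension at least `2r - 1`. -/
theorem dim_products_ge_two_r_sub_one_complex
    (U : Submodule ℂ (Polynomial ℂ)) [FiniteDimensional ℂ U] (r : ℕ)
    (hU : Module.finrank ℂ U = r) :
    2 * r - 1 ≤ Module.finrank ℂ
      (Submodule.span ℂ {f : Polynomial ℂ | ∃ p ∈ U, ∃ q ∈ U, f = p * q}) := by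
  classical
  rcases Nat.eq_zero_or_pos r with rfl | hrpos
  · simp
  obtain ⟨q, hqU, hq0, hqm⟩ := exists_chain r U inferInstance hU
  set T : Set (Polynomial ℂ) := {f : Polynomial ℂ | ∃ p ∈ U, ∃ q ∈ U, f = p * q} with hT
  set Sp := Submodule.span ℂ T with hSp
  -- finite dimensionality of the span
  obtain ⟨N, hN⟩ := sub_le_degreeLE U
  have hle : Sp ≤ degreeLE ℂ ((N + N : ℕ) : WithBot ℕ) := by
    rw [hSp, Submodule.span_le]
    rintro f ⟨p, hp, q, hq, rfl⟩
    rw [SetLike.mem_coe, mem_degreeLE]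
    calc (p * q).degree ≤ p.degree + q.degree := degree_mul_le p q
      _ ≤ (N : WithBot ℕ) + (N : WithBot ℕ) :=
          add_le_add (mem_degreeLE.1 (hN hp)) (mem_degreeLE.1 (hN hq))
      _ = ((N + N : ℕ) : WithBot ℕ) := by push_cast; rfl
  haveI : FiniteDimensional ℂ (degreeLE ℂ ((N + N : ℕ) : WithBot ℕ)) := by
    rw [degreeLE_eq_span_X_pow]
    exact FiniteDimensional.span_of_finite ℂ (Finset.finite_toSet _)
  haveI hFDSp : FiniteDimensional ℂ Sp := Submodule.finiteDimensional_of_le hle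
  -- the 2r-1 products with distinct degrees
  set n : Fin r → ℕ := fun i => (q i).natDegree with hn
  set s : Fin (2 * r - 1) → Polynomial ℂ := fun i =>
    if h : (i : ℕ) < r then q ⟨0, hrpos⟩ * q ⟨i, h⟩
    else q ⟨(i : ℕ) - r + 1, by have := i.isLt; omega⟩ * q ⟨r - 1, by omega⟩ with hs
  have hs0 : ∀ i, s i ≠ 0 := by
    intro i
    rw [hs]
    dsimp only
    split <;> exact mul_ne_zero (hq0 _) (hq0 _)
  have hsmem : ∀ i, s i ∈ T := by
    intro i
    rw [hs]
    dsimp only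
    split <;> exact ⟨_, hqU _, _, hqU _, rfl⟩
  have hsm : StrictMono fun i => (s i).natDegree := by
    intro i j hij
    have hij' : (i : ℕ) < (j : ℕ) := hij
    have hjlt := j.isLt
    rw [hs]
    dsimp only
    rcases Nat.lt_or_ge (i : ℕ) r with hi | hi <;>
      rcases Nat.lt_or_ge (j : ℕ) r with hj | hj
    · rw [dif_pos hi, dif_pos hj, natDegree_mul (hq0 _) (hq0 _),
        natDegree_mul (hq0 _) (hq0 _)]
      exact Nat.add_lt_add_left (hqm (show (⟨(i:ℕ), hi⟩ : Fin r) < ⟨(j:ℕ), hj⟩ from hij')) _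
    · rw [dif_pos hi, dif_neg (by omega), natDegree_mul (hq0 _) (hq0 _),
        natDegree_mul (hq0 _) (hq0 _)]
      have h1 : (q ⟨0, hrpos⟩).natDegree < (q ⟨(j:ℕ) - r + 1, by omega⟩).natDegree :=
        hqm (show (⟨0, hrpos⟩ : Fin r) < ⟨(j:ℕ) - r + 1, by omega⟩ from by
          simp only [Fin.mk_lt_mk]; omega)
      have h2 : (q ⟨(i:ℕ), hi⟩).natDegree ≤ (q ⟨r - 1, by omega⟩).natDegree := by
        rcases eq_or_lt_of_le (show (i : ℕ) ≤ r - 1 by omega) with h | h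
        · exact le_of_eq (congrArg (fun z => (q z).natDegree) (Fin.mk_eq_mk.mpr h))
        · exact le_of_lt (hqm (show (⟨(i:ℕ), hi⟩ : Fin r) < ⟨r - 1, by omega⟩ from h))
      omega
    · omega
    · rw [dif_neg (by omega), dif_neg (by omega), natDegree_mul (hq0 _) (hq0 _),
        natDegree_mul (hq0 _) (hq0 _)]
      have := i.isLt
      have h1 : (q ⟨(i:ℕ) - r + 1, by omega⟩).natDegree <
          (q ⟨(j:ℕ) - r + 1, by omega⟩).natDegree :=
        hqm (show (⟨(i:ℕ) - r + 1, by omega⟩ : Fin r) < ⟨(j:ℕ) - r + 1, by omega⟩ from by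
          simp only [Fin.mk_lt_mk]; omega)
      omega
  have hli : LinearIndependent ℂ s := li_of_strictMono_natDegree s hs0 hsm
  set t : Fin (2 * r - 1) → Sp := fun i => ⟨s i, Submodule.subset_span (hsmem i)⟩ with ht
  have hlit : LinearIndependent ℂ t := by
    apply LinearIndependent.of_comp Sp.subtype
    exact hli
  calc 2 * r - 1 = Fintype.card (Fin (2 * r - 1)) := (Fintype.card_fin _).symm
    _ ≤ finrank ℂ Sp := hlit.fintype_card_le_finrank
end

section
/- Let d ≥ 3 and let U ⊆ ℝ[x]_{≤d} (polynomials of degree at most d) be a d-dimensional subspace with 1 ∉ U. If dim(UU) = 2d − 1, then all elements of U have a common real root. -/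
open Polynomial Module Submodule

/-- Polynomials with strictly increasing degrees are linearly independent. -/
lemma li_of_degree_strictMono {N : ℕ} (g : Fin N → Polynomial ℝ)
    (h0 : ∀ i, g i ≠ 0) (hmono : StrictMono fun i => (g i).degree) :
    LinearIndependent ℝ g := by
  classical
  rw [linearIndependent_iff']
  intro s
  induction s using Finset.induction_on_max with
  | empty => intro c _ i hi; exact absurd hi (Finset.notMem_empty i)
  | insert a t hlt ih =>
    intro c hsum i hi
    have hat : a ∉ t := fun h => lt_irrefl a (hlt a h)
    have hca : c a = 0 := by
      have h1 : (∑ j ∈ insert a t, c j • g j).coeff (g a).natDegree = 0 := by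
        rw [hsum, Polynomial.coeff_zero]
      rw [Polynomial.finset_sum_coeff, Finset.sum_insert hat] at h1
      have hz : ∀ j ∈ t, (c j • g j).coeff (g a).natDegree = 0 := by
        intro j hj
        have hdeg : (g j).degree < ((g a).natDegree : WithBot ℕ) := by
          rw [← Polynomial.degree_eq_natDegree (h0 a)]
          exact hmono (hlt j hj)
        rw [Polynomial.coeff_smul, Polynomial.coeff_eq_zero_of_degree_lt hdeg, smul_zero]
      rw [Finset.sum_eq_zero hz, add_zero, Polynomial.coeff_smul,
        Polynomial.coeff_natDegree, smul_eq_mul] at h1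
      rcases mul_eq_zero.mp h1 with h | h
      · exact h
      · exact absurd h (Polynomial.leadingCoeff_ne_zero.mpr (h0 a))
    rcases Finset.mem_insert.mp hi with rfl | hi'
    · exact hca
    · refine ih c ?_ i hi'
      rwa [Finset.sum_insert hat, hca, zero_smul, zero_add] at hsum

lemma finrank_degreeLE (n : ℕ) :
    Module.finrank ℝ (Polynomial.degreeLE ℝ (n : ℕ)) = n + 1 := by
  rw [← Polynomial.degreeLT_succ_eq_degreeLE]
  rw [LinearEquiv.finrank_eq (Polynomial.degreeLTEquiv ℝ (n+1))]
  simp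

instance fd_degreeLE (n : ℕ) : FiniteDimensional ℝ (Polynomial.degreeLE ℝ (n : ℕ)) := by
  rw [← Polynomial.degreeLT_succ_eq_degreeLE]
  exact Module.Finite.equiv (Polynomial.degreeLTEquiv ℝ (n+1)).symm

/-- Let `d ≥ 3` and let `U ⊆ ℝ[x]_{≤ d}` be a `d`-dimensional subspace with
`1 ∉ U`. If the span of all products `p * q` (`p, q ∈ U`) has dimension `2d - 1`, then the
elements of `U` have a common real root. -/
theorem common_root_of_min_product_dim
    (d : ℕ) (hd : 3 ≤ d) (U : Submodule ℝ (Polynomial ℝ))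
    (hUle : U ≤ Polynomial.degreeLE ℝ (d : ℕ))
    (hdim : Module.finrank ℝ U = d)
    (hone : (1 : Polynomial ℝ) ∉ U)
    (hUU : Module.finrank ℝ
        (Submodule.span ℝ {f : Polynomial ℝ | ∃ p ∈ U, ∃ q ∈ U, f = p * q}) = 2 * d - 1) :
    ∃ a : ℝ, ∀ p ∈ U, Polynomial.eval a p = 0 := by
  classical
  set UU := Submodule.span ℝ {f : Polynomial ℝ | ∃ p ∈ U, ∃ q ∈ U, f = p * q} with hUUdef
  have hUUle : UU ≤ Polynomial.degreeLE ℝ ((2*d : ℕ)) := by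
    rw [hUUdef]
    apply Submodule.span_le.mpr
    rintro f ⟨p, hp, q, hq, rfl⟩
    rw [SetLike.mem_coe, Polynomial.mem_degreeLE]
    have h1 := Polynomial.mem_degreeLE.mp (hUle hp)
    have h2 := Polynomial.mem_degreeLE.mp (hUle hq)
    calc (p*q).degree ≤ p.degree + q.degree := Polynomial.degree_mul_le p q
      _ ≤ ((d:ℕ) : WithBot ℕ) + ((d:ℕ) : WithBot ℕ) := add_le_add h1 h2
      _ = ((2*d : ℕ) : WithBot ℕ) := by rw [two_mul, Nat.cast_add]
  haveI : FiniteDimensional ℝ UU := Submodule.finiteDimensional_of_le hUUle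
  haveI : FiniteDimensional ℝ U := Submodule.finiteDimensional_of_le hUle
  -- Step A : degreeLE d = U ⊔ span {1}
  have honemem : (1 : Polynomial ℝ) ∈ Polynomial.degreeLE ℝ (d:ℕ) := by
    rw [Polynomial.mem_degreeLE, Polynomial.degree_one]
    exact_mod_cast Nat.cast_nonneg' d
  have hinfU : U ⊓ Submodule.span ℝ {(1:Polynomial ℝ)} = ⊥ := by
    rw [eq_bot_iff]
    rintro x hx
    rcases Submodule.mem_span_singleton.mp hx.2 with ⟨r, rfl⟩
    by_cases hr : r = 0
    · simp [hr]
    · exfalso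
      apply hone
      have := U.smul_mem r⁻¹ hx.1
      rwa [smul_smul, inv_mul_cancel₀ hr, one_smul] at this
  have hsupU : U ⊔ Submodule.span ℝ {(1:Polynomial ℝ)} = Polynomial.degreeLE ℝ (d : ℕ) := by
    have hle2 : U ⊔ Submodule.span ℝ {(1:Polynomial ℝ)} ≤ Polynomial.degreeLE ℝ (d:ℕ) :=
      sup_le hUle (by rw [Submodule.span_le, Set.singleton_subset_iff]; exact honemem)
    refine Submodule.eq_of_le_of_finrank_le hle2 ?_
    have hkey := Submodule.finrank_sup_add_finrank_inf_eq U (Submodule.span ℝ {(1:Polynomial ℝ)})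
    rw [hinfU, hdim, finrank_span_singleton (one_ne_zero), finrank_bot, add_zero] at hkey
    rw [finrank_degreeLE, hkey]
  have hamem : ∀ i : ℕ, i ≤ d → ∃ r : ℝ, (X:Polynomial ℝ)^i - Polynomial.C r ∈ U := by
    intro i hi
    have hx : (X:Polynomial ℝ)^i ∈ U ⊔ Submodule.span ℝ {(1:Polynomial ℝ)} := by
      rw [hsupU, Polynomial.mem_degreeLE, Polynomial.degree_X_pow]
      exact_mod_cast hi
    rcases Submodule.mem_sup.mp hx with ⟨y, hy, z, hz, hyz⟩
    rcases Submodule.mem_span_singleton.mp hz with ⟨r, rfl⟩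
    refine ⟨r, ?_⟩
    have hEq : (X:Polynomial ℝ)^i - Polynomial.C r = y := by
      rw [← hyz, Polynomial.smul_eq_C_mul, mul_one]; ring
    rwa [hEq]
  choose! a ha using hamem
  have hUUprod : ∀ p ∈ U, ∀ q ∈ U, p * q ∈ UU := by
    intro p hp q hq
    rw [hUUdef]
    exact Submodule.subset_span ⟨p, hp, q, hq, rfl⟩
  set L := Submodule.span ℝ {(1:Polynomial ℝ), X} with hLdef
  have hL1 : L ≤ Polynomial.degreeLE ℝ ((1:ℕ)) := by
    rw [hLdef, Submodule.span_le]
    rintro f (rfl|rfl) <;> rw [SetLike.mem_coe, Polynomial.mem_degreeLE]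
    · rw [Polynomial.degree_one]; exact_mod_cast Nat.zero_le 1
    · rw [Polynomial.degree_X]; exact le_refl _
  have hLle : L ≤ Polynomial.degreeLE ℝ ((2*d:ℕ)) := by
    refine le_trans hL1 (Polynomial.degreeLE_mono ?_)
    exact_mod_cast (by omega : (1:ℕ) ≤ 2*d)
  have hset : Polynomial.degreeLE ℝ ((1:ℕ)) = L := by
    rw [Polynomial.degreeLE_eq_span_X_pow, hLdef]
    congr 1
    rw [show Finset.range 2 = {0, 1} by decide]
    rw [Finset.image_insert, Finset.image_singleton]
    simp
  have hLrank : Module.finrank ℝ L = 2 := by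
    rw [← hset, finrank_degreeLE 1]
  -- products of each degree
  have hprod : ∀ m : ℕ, 2 ≤ m → m ≤ 2*d → ∃ g, g ∈ UU ∧ g.Monic ∧ g.natDegree = m := by
    intro m h2 hm
    have hj1 : 1 ≤ min (m-1) d := by omega
    have hjd : min (m-1) d ≤ d := by omega
    have hi1 : 1 ≤ m - min (m-1) d := by omega
    have hid : m - min (m-1) d ≤ d := by omega
    have hij : (m - min (m-1) d) + min (m-1) d = m := by omega
    set i := m - min (m-1) d
    set j := min (m-1) d
    have hmi : ((X:Polynomial ℝ)^i - Polynomial.C (a i)).Monic :=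
      monic_X_pow_sub_C _ (by omega)
    have hmj : ((X:Polynomial ℝ)^j - Polynomial.C (a j)).Monic :=
      monic_X_pow_sub_C _ (by omega)
    refine ⟨(X^i - Polynomial.C (a i)) * (X^j - Polynomial.C (a j)),
      hUUprod _ (ha i hid) _ (ha j hjd), hmi.mul hmj, ?_⟩
    rw [hmi.natDegree_mul hmj, Polynomial.natDegree_X_pow_sub_C,
      Polynomial.natDegree_X_pow_sub_C, hij]
  choose! P hPmem hPmonic hPdeg using hprod
  have hinter : UU ⊓ L = ⊥ := by
    by_contra hne
    obtain ⟨v, hv, hv0⟩ := Submodule.exists_mem_ne_zero_of_ne_bot hne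
    have hvdeg : v.degree ≤ ((1:ℕ) : WithBot ℕ) :=
      Polynomial.mem_degreeLE.mp (hL1 hv.2)
    set G : Fin (2*d) → Polynomial ℝ :=
      fun i => if (i:ℕ) = 0 then v else P ((i:ℕ)+1) with hGdef
    have hGbig : ∀ i : Fin (2*d), (i:ℕ) ≠ 0 →
        (G i).Monic ∧ (G i).natDegree = (i:ℕ)+1 := by
      intro i hi
      have h2 : 2 ≤ (i:ℕ)+1 := by omega
      have hle : (i:ℕ)+1 ≤ 2*d := by omega
      rw [hGdef]
      simp only [hi, if_false]
      exact ⟨hPmonic _ h2 hle, hPdeg _ h2 hle⟩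
    have hG0 : ∀ i, G i ≠ 0 := by
      intro i
      by_cases hi : (i:ℕ) = 0
      · rw [hGdef]; simpa [hi] using hv0
      · exact ((hGbig i hi).1).ne_zero
    have hGdeg : ∀ i : Fin (2*d), (i:ℕ) ≠ 0 →
        (G i).degree = (((i:ℕ)+1 : ℕ) : WithBot ℕ) := by
      intro i hi
      rw [Polynomial.degree_eq_natDegree (hG0 i), (hGbig i hi).2]
    have hmono : StrictMono fun i => (G i).degree := by
      intro i j hij
      show (G i).degree < (G j).degree
      have hj0 : (j:ℕ) ≠ 0 := by
        have : (i:ℕ) < (j:ℕ) := hij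
        omega
      have hdj := hGdeg j hj0
      by_cases hi0 : (i:ℕ) = 0
      · have hdi : (G i).degree ≤ ((1:ℕ) : WithBot ℕ) := by
          rw [hGdef]; simpa [hi0] using hvdeg
        refine lt_of_le_of_lt hdi ?_
        rw [hdj]
        have : (1:ℕ) < (j:ℕ)+1 := by
          have : (i:ℕ) < (j:ℕ) := hij
          omega
        exact_mod_cast this
      · rw [hGdeg i hi0, hdj]
        have : (i:ℕ)+1 < (j:ℕ)+1 := by
          have : (i:ℕ) < (j:ℕ) := hij
          omega
        exact_mod_cast this
    have hli := li_of_degree_strictMono G hG0 hmono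
    have hspan : Submodule.span ℝ (Set.range G) ≤ UU := by
      rw [Submodule.span_le]
      rintro f ⟨i, rfl⟩
      by_cases hi : (i:ℕ) = 0
      · rw [hGdef]; simpa [hi] using hv.1
      · have h2 : 2 ≤ (i:ℕ)+1 := by omega
        have hle : (i:ℕ)+1 ≤ 2*d := by omega
        rw [hGdef]
        simp only [hi, if_false]
        exact hPmem _ h2 hle
    have hfr := Submodule.finrank_mono hspan
    rw [finrank_span_eq_card hli] at hfr
    simp only [Fintype.card_fin, hUU] at hfr
    omega
  have hsup2 : UU ⊔ L = Polynomial.degreeLE ℝ ((2*d:ℕ)) := by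
    haveI : FiniteDimensional ℝ L :=
      Submodule.finiteDimensional_of_le hLle
    refine Submodule.eq_of_le_of_finrank_le (sup_le hUUle hLle) ?_
    have hkey := Submodule.finrank_sup_add_finrank_inf_eq UU L
    rw [hinter, hUU, hLrank, finrank_bot, add_zero] at hkey
    rw [finrank_degreeLE, hkey]
    omega
  -- decomposition of monomials
  have hdecomp : ∀ m : ℕ, m ≤ 2*d → ∃ (w : Polynomial ℝ) (cm em : ℝ),
      w ∈ UU ∧ (X:Polynomial ℝ)^m = w + Polynomial.C cm + Polynomial.C em * X := by
    intro m hm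
    have hx : (X:Polynomial ℝ)^m ∈ UU ⊔ L := by
      rw [hsup2, Polynomial.mem_degreeLE, Polynomial.degree_X_pow]
      exact_mod_cast hm
    rcases Submodule.mem_sup.mp hx with ⟨w, hw, z, hz, hwz⟩
    rw [hLdef] at hz
    rcases Submodule.mem_span_pair.mp hz with ⟨cm, em, hcm⟩
    refine ⟨w, cm, em, hw, ?_⟩
    rw [← hwz, ← hcm, Polynomial.smul_eq_C_mul, Polynomial.smul_eq_C_mul, mul_one]
    ring
  choose! w c e hwmem hdec using hdecomp
  -- uniqueness
  have huniq : ∀ A B : ℝ, (Polynomial.C A + Polynomial.C B * X : Polynomial ℝ) ∈ UU →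
      A = 0 ∧ B = 0 := by
    intro A B hAB
    have hABL : (Polynomial.C A + Polynomial.C B * X : Polynomial ℝ) ∈ L := by
      rw [hLdef]
      refine Submodule.add_mem _ ?_ ?_
      · have h1 : (Polynomial.C A : Polynomial ℝ) = A • 1 := by
          rw [Polynomial.smul_eq_C_mul, mul_one]
        rw [h1]
        exact Submodule.smul_mem _ _ (Submodule.subset_span (by simp))
      · have h1 : (Polynomial.C B * X : Polynomial ℝ) = B • X := by
          rw [Polynomial.smul_eq_C_mul]
        rw [h1]
        exact Submodule.smul_mem _ _ (Submodule.subset_span (by simp))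
    have h0 : (Polynomial.C A + Polynomial.C B * X : Polynomial ℝ) = 0 := by
      have hm : (Polynomial.C A + Polynomial.C B * X : Polynomial ℝ) ∈ UU ⊓ L := ⟨hAB, hABL⟩
      rwa [hinter, Submodule.mem_bot] at hm
    constructor
    · have := congrArg (fun p => Polynomial.coeff p 0) h0
      simpa using this
    · have := congrArg (fun p => Polynomial.coeff p 1) h0
      simpa using this
  -- c 1 = 0, e 1 = 1
  have hce1 : c 1 = 0 ∧ e 1 = 1 := by
    have h1 := hdec 1 (by omega)
    rw [pow_one] at h1
    have hmem : (Polynomial.C (c 1) + Polynomial.C (e 1 - 1) * X : Polynomial ℝ) ∈ UU := by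
      have hEq : (Polynomial.C (c 1) + Polynomial.C (e 1 - 1) * X : Polynomial ℝ) = -(w 1) := by
        rw [map_sub, map_one]
        linear_combination -h1
      rw [hEq]
      exact Submodule.neg_mem _ (hwmem 1 (by omega))
    obtain ⟨h2, h3⟩ := huniq _ _ hmem
    exact ⟨h2, by linarith⟩
  -- constraints
  have Econ : ∀ i j : ℕ, 1 ≤ i → i ≤ d → 1 ≤ j → j ≤ d →
      e (i+j) = a i * e j + a j * e i ∧ c (i+j) = a i * c j + a j * c i - a i * a j := by
    intro i j hi1 hid hj1 hjd
    have hP : ((X:Polynomial ℝ)^i - Polynomial.C (a i)) * (X^j - Polynomial.C (a j)) ∈ UU :=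
      hUUprod _ (ha i hid) _ (ha j hjd)
    have hQ : (w (i+j) - Polynomial.C (a i) * w j - Polynomial.C (a j) * w i) ∈ UU := by
      refine Submodule.sub_mem _ (Submodule.sub_mem _ (hwmem (i+j) (by omega)) ?_) ?_
      · rw [← Polynomial.smul_eq_C_mul]
        exact Submodule.smul_mem _ _ (hwmem j (by omega))
      · rw [← Polynomial.smul_eq_C_mul]
        exact Submodule.smul_mem _ _ (hwmem i (by omega))
    have hdiff : ((X:Polynomial ℝ)^i - Polynomial.C (a i)) * (X^j - Polynomial.C (a j))
        - (w (i+j) - Polynomial.C (a i) * w j - Polynomial.C (a j) * w i)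
        = Polynomial.C (c (i+j) - (a i * c j + a j * c i - a i * a j))
          + Polynomial.C (e (i+j) - (a i * e j + a j * e i)) * X := by
      have h1 := hdec (i+j) (by omega)
      have h2 := hdec j (by omega)
      have h3 := hdec i (by omega)
      have hw1 : w (i+j) = X^(i+j) - Polynomial.C (c (i+j)) - Polynomial.C (e (i+j)) * X := by
        linear_combination -h1
      have hw2 : w j = X^j - Polynomial.C (c j) - Polynomial.C (e j) * X := by
        linear_combination -h2
      have hw3 : w i = X^i - Polynomial.C (c i) - Polynomial.C (e i) * X := by
        linear_combination -h3
      rw [hw1, hw2, hw3]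
      simp only [map_sub, map_add, map_mul]
      ring
    have hmem := Submodule.sub_mem _ hP hQ
    rw [hdiff] at hmem
    obtain ⟨h1, h2⟩ := huniq _ _ hmem
    constructor
    · linarith
    · linarith
  set α := a 1 with hα
  have Erec : ∀ j, 1 ≤ j → j ≤ d → e (j+1) = α * e j + a j := by
    intro j h1 hj
    have h := (Econ 1 j le_rfl (by omega) h1 hj).1
    rw [hce1.2] at h
    rw [add_comm j 1, h, hα]
    ring
  have Crec : ∀ j, 1 ≤ j → j ≤ d → c (j+1) = α * c j - α * a j := by
    intro j h1 hj
    have h := (Econ 1 j le_rfl (by omega) h1 hj).2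
    rw [hce1.1] at h
    rw [add_comm j 1, h, hα]
    ring
  -- small values
  have he2 : e 2 = 2 * α := by
    have := Erec 1 le_rfl (by omega)
    rw [hce1.2] at this
    rw [show (2:ℕ) = 1+1 from rfl, this, hα]; ring
  have he3 : e 3 = 2*α^2 + a 2 := by
    have := Erec 2 (by omega) (by omega)
    rw [he2] at this
    rw [show (3:ℕ) = 2+1 from rfl, this]; ring
  have he4 : e 4 = α * (2*α^2 + a 2) + a 3 := by
    have := Erec 3 (by omega) (by omega)
    rw [he3] at this
    rw [show (4:ℕ) = 3+1 from rfl, this]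
  have hc2 : c 2 = -α^2 := by
    have := Crec 1 le_rfl (by omega)
    rw [hce1.1, hα] at this
    rw [show (2:ℕ) = 1+1 from rfl, this]; ring
  have hc3 : c 3 = -α^3 - α * a 2 := by
    have := Crec 2 (by omega) (by omega)
    rw [hc2] at this
    rw [show (3:ℕ) = 2+1 from rfl, this]; ring
  have hc4 : c 4 = α * (-α^3 - α * a 2) - α * a 3 := by
    have := Crec 3 (by omega) (by omega)
    rw [hc3] at this
    rw [show (4:ℕ) = 3+1 from rfl, this]
  have hE22 := (Econ 2 2 (by omega) (by omega) (by omega) (by omega)).1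
  have hC22 := (Econ 2 2 (by omega) (by omega) (by omega) (by omega)).2
  rw [show (2+2:ℕ) = 4 from rfl, he4, he2] at hE22
  rw [show (2+2:ℕ) = 4 from rfl, hc4, hc2] at hC22
  -- a 2 = α², a 3 = α³
  have ha2 : a 2 = α^2 := by
    have key : (a 2 - α^2)^2 = 0 := by linear_combination α*hE22 + hC22
    have := pow_eq_zero_iff (n := 2) (by norm_num) |>.mp key
    linarith
  have ha3 : a 3 = α^3 := by
    rw [ha2] at hE22
    linear_combination hE22
  -- main induction
  have main : ∀ n : ℕ, 1 ≤ n → n ≤ d → a n = α^n ∧ e n = (n:ℝ) * α^(n-1) := by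
    intro n
    induction n using Nat.strong_induction_on with
    | _ n ih =>
      intro h1 hn
      rcases (by omega : n = 1 ∨ n = 2 ∨ n = 3 ∨ 4 ≤ n) with rfl | rfl | rfl | h4
      · refine ⟨by rw [hα, pow_one], ?_⟩
        rw [hce1.2]; norm_num
      · refine ⟨ha2, ?_⟩
        rw [he2]; norm_num
      · refine ⟨ha3, ?_⟩
        rw [he3, ha2, show (3:ℕ)-1 = 2 from rfl]
        push_cast; ring
      · obtain ⟨k, rfl⟩ : ∃ k, n = k + 4 := ⟨n - 4, by omega⟩
        have ih1 := ih (k+3) (by omega) (by omega) (by omega)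
        obtain ⟨iha, ihe⟩ := ih1
        rw [show k+3-1 = k+2 from by omega] at ihe
        have het : e (k+4) = α * e (k+3) + a (k+3) := by
          have := Erec (k+3) (by omega) (by omega)
          rwa [show k+3+1 = k+4 from by omega] at this
        have het1 : e (k+5) = α * e (k+4) + a (k+4) := by
          have := Erec (k+4) (by omega) (by omega)
          rwa [show k+4+1 = k+5 from by omega] at this
        have hE2 : e (k+5) = a 2 * e (k+3) + a (k+3) * e 2 := by
          have := (Econ 2 (k+3) (by omega) (by omega) (by omega) (by omega)).1
          rwa [show 2+(k+3) = k+5 from by omega] at this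
        have hak4 : a (k+4) = a 2 * e (k+3) + a (k+3) * e 2 - α * e (k+4) := by
          rw [← hE2, het1]; ring
        have hek4 : e (k+4) = ((k:ℝ)+4) * α^(k+3) := by
          rw [het, iha, ihe]
          push_cast
          ring
        constructor
        · rw [hak4, ha2, he2, iha, ihe, hek4]
          push_cast
          ring
        · rw [show k+4-1 = k+3 from by omega, hek4]
          push_cast
          ring
  -- conclusion
  refine ⟨α, ?_⟩
  intro p hp
  have hgen : ∀ q ∈ Polynomial.degreeLE ℝ (d:ℕ),
      q - Polynomial.C (Polynomial.eval α q) ∈ U := by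
    intro q hq
    rw [Polynomial.degreeLE_eq_span_X_pow] at hq
    induction hq using Submodule.span_induction with
    | mem x hx =>
      simp only [Finset.coe_image, Set.mem_image, Finset.mem_coe, Finset.mem_range] at hx
      obtain ⟨i, hi, rfl⟩ := hx
      rw [Polynomial.eval_pow, Polynomial.eval_X]
      rcases Nat.eq_zero_or_pos i with rfl | hipos
      · simpa using U.zero_mem
      · have := (main i hipos (by omega)).1
        rw [← this]
        exact ha i (by omega)
    | zero => simpa using U.zero_mem
    | add x y hx hy ihx ihy =>
      have : x + y - Polynomial.C (Polynomial.eval α (x+y))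
          = (x - Polynomial.C (Polynomial.eval α x)) + (y - Polynomial.C (Polynomial.eval α y)) := by
        rw [Polynomial.eval_add, map_add]; ring
      rw [this]
      exact U.add_mem ihx ihy
    | smul r x hx ihx =>
      have : r • x - Polynomial.C (Polynomial.eval α (r • x))
          = r • (x - Polynomial.C (Polynomial.eval α x)) := by
        rw [Polynomial.smul_eq_C_mul, Polynomial.smul_eq_C_mul, Polynomial.eval_mul,
          Polynomial.eval_C, map_mul]
        ring
      rw [this]
      exact U.smul_mem _ ihx
  have h1 : p - Polynomial.C (Polynomial.eval α p) ∈ U := hgen p (hUle hp)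
  have h2 : Polynomial.C (Polynomial.eval α p) ∈ U := by
    have := U.sub_mem hp h1
    simpa using this
  by_contra h0
  apply hone
  have h3 := U.smul_mem (Polynomial.eval α p)⁻¹ h2
  rwa [Polynomial.smul_eq_C_mul, ← map_mul, inv_mul_cancel₀ h0, map_one] at h3
end

section
/- Let U be a face subspace for the Hermitian Gram spectrahedron H⁺(f) of f. Then the corresponding face F(U) has real dimension dim_ℂ(U)² − dim_ℂ(U·conj(U)). -/
open scoped ComplexOrder
open Matrix

set_option maxHeartbeats 1000000
set_option synthInstance.maxHeartbeats 400000
set_option linter.unusedSectionVars false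
set_option linter.unusedVariables false

section SAdj
variable {E : Type*} [AddCommGroup E] [Module ℂ E] [Module ℝ E] [IsScalarTower ℝ ℂ E]
  [StarAddMonoid E] [StarModule ℂ E]

/-- The real subspace of self-adjoint elements of a complex submodule. -/
def sadjSub (W : Submodule ℂ E) : Submodule ℝ E where
  carrier := {x | x ∈ W ∧ star x = x}
  add_mem' := by
    rintro a b ⟨haW, ha⟩ ⟨hbW, hb⟩
    exact ⟨W.add_mem haW hbW, by rw [star_add, ha, hb]⟩
  zero_mem' := ⟨W.zero_mem, star_zero E⟩
  smul_mem' := by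
    rintro c x ⟨hxW, hx⟩
    rw [← algebraMap_smul ℂ c x]
    refine ⟨W.smul_mem _ hxW, ?_⟩
    rw [star_smul, hx, Complex.coe_algebraMap, RCLike.star_def, Complex.conj_ofReal]

@[simp] lemma mem_sadjSub {W : Submodule ℂ E} {x : E} :
    x ∈ sadjSub W ↔ x ∈ W ∧ star x = x := Iff.rfl

/-- The real subspace of skew-adjoint elements of a complex submodule. -/
def skadjSub (W : Submodule ℂ E) : Submodule ℝ E where
  carrier := {x | x ∈ W ∧ star x = -x}
  add_mem' := by
    rintro a b ⟨haW, ha⟩ ⟨hbW, hb⟩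
    exact ⟨W.add_mem haW hbW, by rw [star_add, ha, hb, neg_add]⟩
  zero_mem' := ⟨W.zero_mem, by simp⟩
  smul_mem' := by
    rintro c x ⟨hxW, hx⟩
    rw [← algebraMap_smul ℂ c x]
    refine ⟨W.smul_mem _ hxW, ?_⟩
    rw [star_smul, hx, Complex.coe_algebraMap, RCLike.star_def, Complex.conj_ofReal, smul_neg]

@[simp] lemma mem_skadjSub {W : Submodule ℂ E} {x : E} :
    x ∈ skadjSub W ↔ x ∈ W ∧ star x = -x := Iff.rfl

theorem finrank_sadjSub (W : Submodule ℂ E) [FiniteDimensional ℂ W]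
    (hW : ∀ x ∈ W, star x ∈ W) :
    Module.finrank ℝ (sadjSub W) = Module.finrank ℂ W := by
  have hsm : ∀ (c : ℝ) {x : E}, x ∈ W → c • x ∈ W := fun c x hx =>
    (W.restrictScalars ℝ).smul_mem c hx
  have hple : sadjSub W ≤ W.restrictScalars ℝ := fun x hx => hx.1
  have hmle : skadjSub W ≤ W.restrictScalars ℝ := fun x hx => hx.1
  haveI : FiniteDimensional ℝ W := Module.Finite.trans (R := ℝ) ℂ W
  haveI : FiniteDimensional ℝ (W.restrictScalars ℝ) :=
    (((Submodule.restrictScalarsEquiv ℝ ℂ E W).restrictScalars ℝ).symm).finiteDimensional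
  haveI : FiniteDimensional ℝ (sadjSub W) := Submodule.finiteDimensional_of_le hple
  haveI : FiniteDimensional ℝ (skadjSub W) := Submodule.finiteDimensional_of_le hmle
  -- the J = multiplication by I equivalence
  let J : E ≃ₗ[ℝ] E := LinearEquiv.ofLinear
    ((LinearMap.lsmul ℂ E Complex.I).restrictScalars ℝ)
    ((LinearMap.lsmul ℂ E (-Complex.I)).restrictScalars ℝ)
    (by ext x; simp [smul_smul])
    (by ext x; simp [smul_smul])
  have hJmap : (sadjSub W).map (J : E →ₗ[ℝ] E) = skadjSub W := by
    apply le_antisymm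
    · rintro _ ⟨x, ⟨hxW, hx⟩, rfl⟩
      have hJx : (J : E →ₗ[ℝ] E) x = Complex.I • x := rfl
      rw [hJx]
      refine ⟨W.smul_mem _ hxW, ?_⟩
      rw [star_smul, hx, RCLike.star_def, Complex.conj_I, neg_smul]
    · rintro y ⟨hyW, hy⟩
      refine ⟨(-Complex.I) • y, ⟨W.smul_mem _ hyW, ?_⟩, ?_⟩
      · rw [star_smul, hy]
        simp [Complex.conj_I]
      · show Complex.I • (-Complex.I) • y = y
        rw [smul_smul]
        simp
  have hrankeq : Module.finrank ℝ (sadjSub W) = Module.finrank ℝ (skadjSub W) := by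
    rw [← hJmap, LinearEquiv.finrank_map_eq]
  have hsup : sadjSub W ⊔ skadjSub W = W.restrictScalars ℝ := by
    apply le_antisymm (sup_le hple hmle)
    intro x hxW
    have h1 : ((2:ℝ)⁻¹ • (x + star x)) ∈ sadjSub W := by
      refine ⟨hsm _ (W.add_mem hxW (hW x hxW)), ?_⟩
      rw [← algebraMap_smul ℂ ((2:ℝ)⁻¹) (x + star x), star_smul, Complex.coe_algebraMap,
        RCLike.star_def, Complex.conj_ofReal, star_add, star_star, add_comm]
    have h2 : ((2:ℝ)⁻¹ • (x - star x)) ∈ skadjSub W := by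
      refine ⟨hsm _ (W.sub_mem hxW (hW x hxW)), ?_⟩
      rw [← algebraMap_smul ℂ ((2:ℝ)⁻¹) (x - star x), star_smul, Complex.coe_algebraMap,
        RCLike.star_def, Complex.conj_ofReal, star_sub, star_star, ← smul_neg, neg_sub]
    have hx' : x = (2:ℝ)⁻¹ • (x + star x) + (2:ℝ)⁻¹ • (x - star x) := by
      rw [← smul_add]
      rw [show x + star x + (x - star x) = (2:ℝ) • x by rw [two_smul]; abel]
      rw [smul_smul]
      norm_num
    rw [hx']
    exact Submodule.add_mem _ (Submodule.mem_sup_left h1) (Submodule.mem_sup_right h2)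
  have hinf : sadjSub W ⊓ skadjSub W = ⊥ := by
    rw [eq_bot_iff]
    rintro x ⟨⟨-, h1⟩, ⟨-, h2⟩⟩
    have hxx : x + x = 0 := by
      nth_rewrite 1 [← h1]
      rw [h2]
      simp
    have h2x : (2:ℝ) • x = 0 := by rw [two_smul]; exact hxx
    have hx0 : x = 0 := by
      rcases smul_eq_zero.mp h2x with h | h
      · norm_num at h
      · exact h
    simp [hx0]
  have hadd := Submodule.finrank_sup_add_finrank_inf_eq (sadjSub W) (skadjSub W)
  rw [hsup, hinf, finrank_bot] at hadd
  have hWr : Module.finrank ℝ (W.restrictScalars ℝ) = 2 * Module.finrank ℂ W := by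
    rw [((Submodule.restrictScalarsEquiv ℝ ℂ E W).restrictScalars ℝ).finrank_eq]
    rw [← Module.finrank_mul_finrank ℝ ℂ W, Complex.finrank_real_complex]
  omega
end SAdj

theorem posDef_of_rank_eq {r : ℕ} {M : Matrix (Fin r) (Fin r) ℂ}
    (hM : M.PosSemidef) (hrank : M.rank = r) : M.PosDef := by
  have hinj : Function.Injective M.mulVecLin := by
    have hsurj : Function.Surjective M.mulVecLin := by
      rw [← LinearMap.range_eq_top]
      apply Submodule.eq_top_of_finrank_eq
      rw [show Module.finrank ℂ (LinearMap.range M.mulVecLin) = M.rank from rfl, hrank,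
        Module.finrank_fin_fun]
    exact (LinearMap.injective_iff_surjective).mpr hsurj
  refine Matrix.PosDef.of_dotProduct_mulVec_pos hM.1 fun x hx => ?_
  refine lt_of_le_of_ne (hM.dotProduct_mulVec_nonneg x) fun h0 => hx ?_
  have : M *ᵥ x = 0 := (hM.dotProduct_mulVec_zero_iff x).mp h0.symm
  refine hinj (?_ : M.mulVecLin x = M.mulVecLin 0)
  simpa using this

open scoped MatrixOrder in
theorem exists_eps_posSemidef {r : ℕ} {M₀ H : Matrix (Fin r) (Fin r) ℂ}
    (hM₀ : M₀.PosDef) (hH : H.IsHermitian) :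
    ∃ ε : ℝ, 0 < ε ∧ (M₀ + (ε : ℂ) • H).PosSemidef := by
  classical
  -- square root of M₀
  set S := CFC.sqrt M₀ with hSdef
  have hSpsd : S.PosSemidef := (CFC.sqrt_nonneg M₀).posSemidef
  have hSS : S * S = M₀ := CFC.sqrt_mul_sqrt_self M₀ hM₀.posSemidef.nonneg
  have hdetS : IsUnit S.det := by
    have : 0 < M₀.det := hM₀.det_pos
    have hdet2 : S.det * S.det = M₀.det := by rw [← Matrix.det_mul, hSS]
    have : S.det ≠ 0 := by
      intro h
      rw [h, mul_zero] at hdet2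
      exact hM₀.det_pos.ne' (by rw [← hdet2])
    exact isUnit_iff_ne_zero.mpr this
  have hSinv : S * S⁻¹ = 1 := Matrix.mul_nonsing_inv S hdetS
  have hSinv' : S⁻¹ * S = 1 := Matrix.nonsing_inv_mul S hdetS
  set K := S⁻¹ * H * S⁻¹ with hKdef
  have hSh : Sᴴ = S := hSpsd.1
  have hSinvh : (S⁻¹)ᴴ = S⁻¹ := by rw [Matrix.conjTranspose_nonsing_inv, hSh]
  have hKherm : K.IsHermitian := by
    show Kᴴ = K
    rw [hKdef, Matrix.conjTranspose_mul, Matrix.conjTranspose_mul, hSinvh, hH.eq, mul_assoc]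
  -- eigenvalues of K
  set lam := hKherm.eigenvalues with hlam
  set ε : ℝ := (1 + ∑ i, |lam i|)⁻¹ with hε
  have hsumnn : 0 ≤ ∑ i, |lam i| := Finset.sum_nonneg fun i _ => abs_nonneg _
  have hεpos : 0 < ε := by positivity
  refine ⟨ε, hεpos, ?_⟩
  have key : M₀ + (ε : ℂ) • H = S * (1 + (ε : ℂ) • K) * S := by
    rw [mul_add, add_mul, mul_one, hSS, Matrix.mul_smul, Matrix.smul_mul, hKdef]
    congr 1
    rw [show S * (S⁻¹ * H * S⁻¹) * S = (S * S⁻¹) * H * (S⁻¹ * S) by simp only [mul_assoc],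
      hSinv, hSinv', one_mul, mul_one]
  rw [key]
  have h1K : (1 + (ε : ℂ) • K).PosSemidef := by
    have hspec : K = (hKherm.eigenvectorUnitary : Matrix (Fin r) (Fin r) ℂ) *
        Matrix.diagonal (RCLike.ofReal ∘ lam) *
        (star (hKherm.eigenvectorUnitary : Matrix (Fin r) (Fin r) ℂ)) := hKherm.spectral_theorem
    have hone : (1 : Matrix (Fin r) (Fin r) ℂ) =
        (hKherm.eigenvectorUnitary : Matrix (Fin r) (Fin r) ℂ) * 1 *
        (star (hKherm.eigenvectorUnitary : Matrix (Fin r) (Fin r) ℂ)) := by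
      rw [mul_one, (Matrix.mem_unitaryGroup_iff).mp (hKherm.eigenvectorUnitary).2]
    rw [hspec, hone, ← Matrix.smul_mul, ← Matrix.mul_smul, ← Matrix.add_mul, ← Matrix.mul_add]
    have : (1 : Matrix (Fin r) (Fin r) ℂ) + (ε : ℂ) • Matrix.diagonal (RCLike.ofReal ∘ lam)
        = Matrix.diagonal (fun i => ((1 + ε * lam i : ℝ) : ℂ)) := by
      ext i j
      rcases eq_or_ne i j with rfl | hij
      · simp [Matrix.one_apply_eq, Matrix.diagonal_apply_eq]
      · simp [Matrix.diagonal_apply_ne _ hij, Matrix.one_apply_ne hij]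
    rw [this]
    apply Matrix.PosSemidef.mul_mul_conjTranspose_same
    rw [Matrix.posSemidef_diagonal_iff]
    intro i
    have hle : ε * |lam i| ≤ 1 := by
      rw [hε]
      rw [inv_mul_le_iff₀ (by positivity), mul_one]
      have : |lam i| ≤ ∑ j, |lam j| :=
        Finset.single_le_sum (fun j _ => abs_nonneg (lam j)) (Finset.mem_univ i)
      linarith
    have : (0:ℝ) ≤ 1 + ε * lam i := by
      have : -(ε * |lam i|) ≤ ε * lam i := by
        rw [neg_le]
        calc -(ε * lam i) = ε * (-lam i) := by ring
        _ ≤ ε * |lam i| := by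
            apply mul_le_mul_of_nonneg_left _ hεpos.le
            exact neg_le_abs _
      linarith
    exact_mod_cast Complex.zero_le_real.mpr this
  have := h1K.mul_mul_conjTranspose_same S
  rwa [hSh] at this

section Mu
variable {B : Type*} [CommRing B] [Algebra ℂ B] [StarRing B] [StarModule ℂ B]

/-- The multiplication map from Gram matrices to the algebra. -/
noncomputable def muMap (r : ℕ) (u : Fin r → B) : Matrix (Fin r) (Fin r) ℂ →ₗ[ℂ] B where
  toFun M := ∑ i, ∑ j, M i j • (u i * star (u j))
  map_add' M N := by
    simp [Matrix.add_apply, add_smul, Finset.sum_add_distrib]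
  map_smul' c M := by
    simp [Matrix.smul_apply, smul_smul, Finset.smul_sum]

lemma muMap_apply (r : ℕ) (u : Fin r → B) (M : Matrix (Fin r) (Fin r) ℂ) :
    muMap r u M = ∑ i, ∑ j, M i j • (u i * star (u j)) := rfl

lemma star_muMap (r : ℕ) (u : Fin r → B) (M : Matrix (Fin r) (Fin r) ℂ) :
    star (muMap r u M) = muMap r u Mᴴ := by
  rw [muMap_apply, muMap_apply]
  conv_rhs => rw [Finset.sum_comm]
  rw [star_sum]
  refine Finset.sum_congr rfl fun a _ => ?_
  rw [star_sum]
  refine Finset.sum_congr rfl fun b _ => ?_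
  rw [star_smul, star_mul', star_star, Matrix.conjTranspose_apply, mul_comm]

lemma range_muMap (r : ℕ) (u : Fin r → B) :
    LinearMap.range (muMap r u)
      = Submodule.span ℂ {b : B | ∃ i j, b = u i * star (u j)} := by
  apply le_antisymm
  · rintro _ ⟨M, rfl⟩
    rw [muMap_apply]
    refine Submodule.sum_mem _ fun i _ => Submodule.sum_mem _ fun j _ =>
      Submodule.smul_mem _ _ ?_
    exact Submodule.subset_span ⟨i, j, rfl⟩
  · rw [Submodule.span_le]
    rintro _ ⟨i, j, rfl⟩
    refine ⟨Matrix.single i j 1, ?_⟩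
    rw [muMap_apply]
    rw [Finset.sum_eq_single i]
    · rw [Finset.sum_eq_single j]
      · simp [Matrix.single]
      · intro b _ hb
        simp [Matrix.single, hb.symm]
      · simp
    · intro a _ ha
      apply Finset.sum_eq_zero
      intro b _
      simp [Matrix.single, ha.symm]
    · simp

end Mu

/-- Let `U` be a face subspace (with basis `u 0, …, u (r-1)`) for the Hermitian
Gram spectrahedron `H⁺(f)` of `f`, i.e. there is a psd Hermitian Gram matrix of `f` in the
coordinates `u` of full rank `r`.  Then the corresponding face `F(U)` — the set of all psd
Hermitian Gram matrices of `f` in the coordinates `u` — has real dimension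
`dim_ℂ(U)² − dim_ℂ(U·conj(U))`.  Here `B` is the complexification of an ℝ-algebra, with
`star` the induced (conjugate-linear) involution, and `U·conj(U)` is the ℂ-span of the
products `u i * star (u j)`. -/
theorem herm_face_dim_eq
    {B : Type*} [CommRing B] [Algebra ℂ B] [StarRing B] [StarModule ℂ B]
    (f : B) (r : ℕ) (u : Fin r → B) (hu : LinearIndependent ℂ u)
    (hface : ∃ M : Matrix (Fin r) (Fin r) ℂ, M.PosSemidef ∧
        (∑ i, ∑ j, M i j • (u i * star (u j))) = f ∧ M.rank = r) :
    Module.finrank ℝ (vectorSpan ℝ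
        {M : Matrix (Fin r) (Fin r) ℂ | M.PosSemidef ∧
          (∑ i, ∑ j, M i j • (u i * star (u j))) = f}) =
      r ^ 2 - Module.finrank ℂ
        (Submodule.span ℂ {b : B | ∃ i j, b = u i * star (u j)}) := by
  classical
  obtain ⟨M₀, hM₀psd, hM₀f, hM₀rank⟩ := hface
  have hM₀ : M₀.PosDef := posDef_of_rank_eq hM₀psd hM₀rank
  set μ := muMap r u with hμdef
  set W := Submodule.span ℂ {b : B | ∃ i j, b = u i * star (u j)} with hWdef
  have hrange : LinearMap.range μ = W := range_muMap r u
  haveI hWfin : FiniteDimensional ℂ W := by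
    rw [← hrange]
    infer_instance
  have hWstar : ∀ x ∈ W, star x ∈ W := by
    intro x hx
    rw [← hrange] at hx ⊢
    obtain ⟨M, rfl⟩ := hx
    exact ⟨Mᴴ, (star_muMap r u M).symm⟩
  set Htop : Submodule ℝ (Matrix (Fin r) (Fin r) ℂ) := sadjSub (⊤ : Submodule ℂ _) with hHtopdef
  set ν : Htop →ₗ[ℝ] B := (μ.restrictScalars ℝ).comp Htop.subtype with hνdef
  have hνapp : ∀ x : Htop, ν x = μ (x : Matrix (Fin r) (Fin r) ℂ) := fun x => rfl
  have hrangeν : LinearMap.range ν = sadjSub W := by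
    apply le_antisymm
    · rintro _ ⟨⟨H, -, hH⟩, rfl⟩
      rw [hνapp]
      refine ⟨hrange ▸ ⟨H, rfl⟩, ?_⟩
      rw [star_muMap]
      exact congrArg μ hH
    · rintro w ⟨hwW, hws⟩
      rw [← hrange] at hwW
      obtain ⟨C, rfl⟩ := hwW
      have hCH : μ Cᴴ = μ C := by rw [← star_muMap]; exact hws
      refine ⟨⟨(2:ℝ)⁻¹ • (C + Cᴴ), trivial, ?_⟩, ?_⟩
      · rw [star_smul, star_trivial, star_add]
        rw [Matrix.star_eq_conjTranspose, Matrix.star_eq_conjTranspose,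
          Matrix.conjTranspose_conjTranspose, add_comm]
      · rw [hνapp]
        show μ ((2:ℝ)⁻¹ • (C + Cᴴ)) = μ C
        rw [LinearMap.map_smul_of_tower, map_add, hCH, ← two_smul ℝ (μ C), smul_smul]
        norm_num
  haveI : FiniteDimensional ℝ Htop := by
    have : Htop ≤ ⊤ := le_top
    infer_instance
  have hdimH : Module.finrank ℝ Htop = r ^ 2 := by
    rw [hHtopdef, finrank_sadjSub (⊤ : Submodule ℂ (Matrix (Fin r) (Fin r) ℂ))
      (fun x _ => trivial), finrank_top, Module.finrank_matrix]
    simp [sq]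
  have hrn := LinearMap.finrank_range_add_finrank_ker ν
  set S : Set (Matrix (Fin r) (Fin r) ℂ) :=
    {M | M.PosSemidef ∧ (∑ i, ∑ j, M i j • (u i * star (u j))) = f} with hSdef
  have hμmem : ∀ {M : Matrix (Fin r) (Fin r) ℂ}, M ∈ S ↔ M.PosSemidef ∧ μ M = f := by
    intro M
    rw [hSdef]
    rfl
  have hspan : vectorSpan ℝ S = (LinearMap.ker ν).map Htop.subtype := by
    apply le_antisymm
    · rw [vectorSpan, Submodule.span_le]
      rintro v ⟨M, hM, M', hM', rfl⟩
      rw [hμmem] at hM hM'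
      refine ⟨⟨M - M', trivial, ?_⟩, ?_, rfl⟩
      · rw [star_sub, Matrix.star_eq_conjTranspose, Matrix.star_eq_conjTranspose,
          hM.1.isHermitian.eq, hM'.1.isHermitian.eq]
      · rw [SetLike.mem_coe, LinearMap.mem_ker, hνapp]
        show μ (M - M') = 0
        rw [map_sub, hM.2, hM'.2, sub_self]
    · rintro x hx
      obtain ⟨y, hker, rfl⟩ := hx
      obtain ⟨H, hHmem⟩ := y
      have hHs : star H = H := hHmem.2
      rw [SetLike.mem_coe, LinearMap.mem_ker, hνapp] at hker
      have hHμ : μ H = 0 := hker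
      have hHherm : H.IsHermitian := hHs
      obtain ⟨ε, hεpos, hpsd⟩ := exists_eps_posSemidef hM₀ hHherm
      have h1 : (M₀ + (ε:ℂ) • H) ∈ S := by
        rw [hμmem]
        refine ⟨hpsd, ?_⟩
        rw [map_add, hμmem.mp ⟨hM₀psd, hM₀f⟩ |>.2, _root_.map_smul, hHμ, smul_zero, add_zero]
      have h2 : (M₀ + (ε:ℂ) • H) -ᵥ M₀ ∈ S -ᵥ S :=
        Set.vsub_mem_vsub h1 (hμmem.mpr ⟨hM₀psd, by rw [← hμmem.mp ⟨hM₀psd, hM₀f⟩ |>.2]⟩)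
      have h3 : (M₀ + (ε:ℂ) • H) -ᵥ M₀ = (ε:ℂ) • H := by
        rw [vsub_eq_sub, add_sub_cancel_left]
      have h4 : (ε:ℂ) • H ∈ vectorSpan ℝ S := Submodule.subset_span (h3 ▸ h2)
      have h5 : (ε:ℂ) • H = ε • H := algebraMap_smul ℂ ε H
      show H ∈ vectorSpan ℝ S
      have h6 : H = ε⁻¹ • (ε • H) := by
        rw [smul_smul, inv_mul_cancel₀ hεpos.ne', one_smul]
      rw [h6]
      exact Submodule.smul_mem _ _ (h5 ▸ h4)
  rw [hspan]
  have hmapeq : Module.finrank ℝ ((LinearMap.ker ν).map Htop.subtype)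
      = Module.finrank ℝ (LinearMap.ker ν) :=
    (LinearEquiv.finrank_eq
      ((LinearMap.ker ν).equivMapOfInjective Htop.subtype (Submodule.injective_subtype _))).symm
  rw [hmapeq]
  have hrange' : Module.finrank ℝ (LinearMap.range ν) = Module.finrank ℂ W := by
    rw [hrangeν, finrank_sadjSub W hWstar]
  rw [hdimH] at hrn
  omega
end

section
/- Let f ∈ ℝ[x,y]_{2d} be a positive binary form with distinct roots. For each 2 ≤ s ≤ 2^d there exist s rank-one tensors in H⁺(f) whose sum has rank at most ⌈log₂(s)⌉ + 1. -/
open MvPolynomial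

/-- Coefficientwise complex conjugation of a complex binary form. -/
noncomputable def conjP (p : MvPolynomial (Fin 2) ℂ) : MvPolynomial (Fin 2) ℂ :=
  MvPolynomial.map (starRingEnd ℂ) p


noncomputable def Eh : MvPolynomial (Fin 2) ℂ →+* Polynomial ℂ :=
  MvPolynomial.eval₂Hom Polynomial.C (fun i => if i = 0 then Polynomial.X else 1)

lemma Eh_C (a : ℂ) : Eh (C a) = Polynomial.C a := by simp [Eh]
lemma Eh_X0 : Eh (X 0) = Polynomial.X := by simp [Eh]
lemma Eh_X1 : Eh (X 1) = 1 := by simp [Eh]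

lemma evalE (z : ℂ) (p : MvPolynomial (Fin 2) ℂ) :
    (Eh p).eval z = MvPolynomial.eval (fun i : Fin 2 => if i = 0 then z else 1) p := by
  have : (Polynomial.evalRingHom z).comp Eh =
      (MvPolynomial.eval (fun i : Fin 2 => if i = 0 then z else 1)) := by
    apply MvPolynomial.ringHom_ext
    · intro r; simp [Eh]
    · intro i
      by_cases h : i = 0 <;> simp [Eh, h]
  exact RingHom.congr_fun this p

lemma eval_coe (f : MvPolynomial (Fin 2) ℝ) (v : Fin 2 → ℝ) :
    MvPolynomial.eval (fun i => (v i : ℂ)) (MvPolynomial.map (algebraMap ℝ ℂ) f)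
      = ((MvPolynomial.eval v f : ℝ) : ℂ) := by
  have : (MvPolynomial.eval (fun i => (v i : ℂ))).comp (MvPolynomial.map (algebraMap ℝ ℂ))
      = (algebraMap ℝ ℂ).comp (MvPolynomial.eval v) := by
    apply MvPolynomial.ringHom_ext
    · intro r; simp
    · intro i; simp
  exact RingHom.congr_fun this f

lemma homog_sum_eq {m : Fin 2 →₀ ℕ} {n : ℕ} {p : MvPolynomial (Fin 2) ℂ}
    (hp : p.IsHomogeneous n) (hm : m ∈ p.support) : m 0 + m 1 = n := by
  have h := hp (MvPolynomial.mem_support_iff.mp hm)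
  rw [← h]
  simp [Finsupp.weight_apply, Finsupp.sum_fintype, Fin.sum_univ_two]

lemma eval_smul_homog {p : MvPolynomial (Fin 2) ℂ} {n : ℕ}
    (hp : p.IsHomogeneous n) (c : ℂ) (v : Fin 2 → ℂ) :
    MvPolynomial.eval (fun i => c * v i) p = c ^ n * MvPolynomial.eval v p := by
  conv_lhs => rw [p.as_sum]
  conv_rhs => rw [p.as_sum]
  rw [map_sum, map_sum, Finset.mul_sum]
  apply Finset.sum_congr rfl
  intro m hm
  rw [MvPolynomial.eval_monomial, MvPolynomial.eval_monomial]
  rw [Finsupp.prod_fintype _ _ (fun i => pow_zero _), Finsupp.prod_fintype _ _ (fun i => pow_zero _)]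
  rw [Fin.prod_univ_two, Fin.prod_univ_two]
  rw [← homog_sum_eq hp hm]
  ring

lemma eq_zero_of_Eh_eq_zero {p : MvPolynomial (Fin 2) ℂ} {n : ℕ}
    (hp : p.IsHomogeneous n) (hE : Eh p = 0) : p = 0 := by
  have h1 : ∀ z : ℂ, MvPolynomial.eval (fun i : Fin 2 => if i = 0 then z else 1) p = 0 := by
    intro z; rw [← evalE, hE, Polynomial.eval_zero]
  have h2 : ∀ v : Fin 2 → ℂ, v 1 ≠ 0 → MvPolynomial.eval v p = 0 := by
    intro v hv
    have hveq : v = fun i => v 1 * (if i = 0 then v 0 / v 1 else 1) := by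
      funext i
      fin_cases i
      · simp [mul_div_cancel₀ _ hv]
      · simp
    rw [hveq, eval_smul_homog hp, h1, mul_zero]
  have h3 : ∀ a : ℂ, MvPolynomial.eval (fun i : Fin 2 => if i = 0 then a else 0) p = 0 := by
    intro a
    set u : Polynomial ℂ :=
      MvPolynomial.eval₂ Polynomial.C (fun i : Fin 2 => if i = 0 then Polynomial.C a else Polynomial.X) p with hu
    have huev : ∀ b : ℂ, u.eval b = MvPolynomial.eval (fun i : Fin 2 => if i = 0 then a else b) p := by
      intro b
      have : (Polynomial.evalRingHom b).comp
          (MvPolynomial.eval₂Hom Polynomial.C (fun i : Fin 2 => if i = 0 then Polynomial.C a else Polynomial.X)) =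
          (MvPolynomial.eval (fun i : Fin 2 => if i = 0 then a else b)) := by
        apply MvPolynomial.ringHom_ext
        · intro r; simp
        · intro i; by_cases h : i = 0 <;> simp [h]
      exact RingHom.congr_fun this p
    have hu0 : u = 0 := by
      apply Polynomial.eq_zero_of_infinite_isRoot
      apply Set.Infinite.mono (s := {b : ℂ | b ≠ 0})
      · intro b hb
        simp only [Set.mem_setOf_eq, Polynomial.IsRoot.def]
        rw [huev]
        apply h2
        simpa using hb
      · have : ({b : ℂ | b ≠ 0}) = {(0:ℂ)}ᶜ := by ext b; simp
        rw [this]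
        exact Set.Finite.infinite_compl (Set.finite_singleton 0)
    have := huev 0
    rw [hu0] at this
    simpa using this.symm
  apply MvPolynomial.funext (q := 0)
  intro v
  rw [map_zero]
  rcases eq_or_ne (v 1) 0 with hv | hv
  · have : v = fun i : Fin 2 => if i = 0 then v 0 else 0 := by
      funext i; fin_cases i
      · simp
      · simpa using hv
    rw [this]; exact h3 (v 0)
  · exact h2 v hv

lemma natDegree_Eh_le {p : MvPolynomial (Fin 2) ℂ} {n : ℕ}
    (hp : p.IsHomogeneous n) : (Eh p).natDegree ≤ n := by
  conv_lhs => rw [p.as_sum]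
  rw [map_sum]
  apply Polynomial.natDegree_sum_le_of_forall_le
  intro m hm
  have : Eh (monomial m (MvPolynomial.coeff m p)) =
      Polynomial.C (MvPolynomial.coeff m p) * Polynomial.X ^ (m 0) := by
    rw [show Eh (monomial m (MvPolynomial.coeff m p)) =
      MvPolynomial.eval₂ Polynomial.C (fun i : Fin 2 => if i = 0 then Polynomial.X else 1)
        (monomial m (MvPolynomial.coeff m p)) from rfl]
    rw [MvPolynomial.eval₂_monomial]
    rw [Finsupp.prod_fintype _ _ (fun i => pow_zero _), Fin.prod_univ_two]
    simp
  rw [this]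
  refine (Polynomial.natDegree_C_mul_X_pow_le _ _).trans ?_
  have := homog_sum_eq hp hm
  omega

lemma multiset_prod_homog (R : Multiset ℂ) :
    ((R.map (fun a => (X 0 : MvPolynomial (Fin 2) ℂ) - C a * X 1)).prod).IsHomogeneous (Multiset.card R) := by
  induction R using Multiset.induction_on with
  | empty => simpa using MvPolynomial.isHomogeneous_one (Fin 2) ℂ
  | cons a R ih =>
    rw [Multiset.map_cons, Multiset.prod_cons, Multiset.card_cons]
    rw [show Multiset.card R + 1 = 1 + Multiset.card R by omega]
    exact ((MvPolynomial.isHomogeneous_X ℂ 0).sub (MvPolynomial.isHomogeneous_C_mul_X a 1)).mul ih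

lemma Eh_linear (a : ℂ) : Eh (X 0 - C a * X 1) = Polynomial.X - Polynomial.C a := by
  rw [map_sub, map_mul, Eh_X0, Eh_X1, Eh_C, mul_one]

lemma Eh_multiset_prod (R : Multiset ℂ) :
    Eh ((R.map (fun a => X 0 - C a * X 1)).prod)
      = (R.map (fun a => Polynomial.X - Polynomial.C a)).prod := by
  rw [map_multiset_prod, Multiset.map_map]
  congr 1
  apply Multiset.map_congr rfl
  intro a _
  exact Eh_linear a
theorem master (d : ℕ) (f : MvPolynomial (Fin 2) ℝ)
    (hf : f.IsHomogeneous (2 * d))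
    (hpos : ∀ v : Fin 2 → ℝ, v ≠ 0 → 0 < MvPolynomial.eval v f)
    (hsqfree : Squarefree (MvPolynomial.map (algebraMap ℝ ℂ) f)) :
    ∃ (e : ℝ) (r : Fin d → ℂ), 0 < e ∧ Function.Injective r ∧ (∀ i, 0 < (r i).im) ∧
      MvPolynomial.map (algebraMap ℝ ℂ) f =
        C ((e : ℂ) * (e : ℂ)) *
          ∏ i : Fin d,
            ((X 0 - C (r i) * X 1) * (X 0 - C ((starRingEnd ℂ) (r i)) * X 1)) := by
  set fC : MvPolynomial (Fin 2) ℂ := MvPolynomial.map (algebraMap ℝ ℂ) f with hfC_def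
  have hfC : fC.IsHomogeneous (2 * d) := hf.map _
  set F : Polynomial ℂ := Eh fC with hF_def
  set c : ℝ := MvPolynomial.eval (fun i : Fin 2 => if i = 0 then (1:ℝ) else 0) f with hc_def
  have hc : 0 < c := hpos _ (by
    intro h
    have := congrFun h 0
    simp at this)
  -- F is nonzero
  have hF0 : F ≠ 0 := by
    intro h
    have h1 : (Eh fC).eval 1 = 0 := by rw [← hF_def, h, Polynomial.eval_zero]
    rw [evalE] at h1
    have heq : (fun i : Fin 2 => if i = 0 then (1:ℂ) else 1) =
        (fun i : Fin 2 => (((fun _ => (1:ℝ)) i : ℝ) : ℂ)) := by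
      funext i; simp
    rw [heq, eval_coe] at h1
    have hpos1 : 0 < MvPolynomial.eval (fun _ : Fin 2 => (1:ℝ)) f := hpos _ (by
      intro h
      have := congrFun h 0
      simp at this)
    rw [Complex.ofReal_eq_zero] at h1
    exact hpos1.ne' h1
  have hdeg : F.natDegree ≤ 2 * d := natDegree_Eh_le hfC
  have hsplits : F.Splits := IsAlgClosed.splits F
  have hcard : Multiset.card F.roots = F.natDegree := (Polynomial.splits_iff_card_roots).mp hsplits
  have hFfac : F = Polynomial.C F.leadingCoeff *
      (F.roots.map fun a => Polynomial.X - Polynomial.C a).prod :=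
    hsplits.eq_prod_roots
  -- the homogeneous counterpart G
  set k : ℕ := 2 * d - F.natDegree with hk_def
  set G : MvPolynomial (Fin 2) ℂ := C F.leadingCoeff * ((X 1) ^ k *
      (F.roots.map (fun a => X 0 - C a * X 1)).prod) with hG_def
  have hG : G.IsHomogeneous (2 * d) := by
    have h1 : ((X 1 : MvPolynomial (Fin 2) ℂ) ^ k *
        (F.roots.map (fun a => X 0 - C a * X 1)).prod).IsHomogeneous (k + Multiset.card F.roots) :=
      (MvPolynomial.isHomogeneous_X_pow 1 k).mul (multiset_prod_homog F.roots)
    have : k + Multiset.card F.roots = 2 * d := by rw [hcard]; omega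
    rw [this] at h1
    exact h1.C_mul _
  have hEG : Eh G = F := by
    rw [hG_def, map_mul, map_mul, map_pow, Eh_X1, Eh_C, one_pow, one_mul, Eh_multiset_prod]
    exact hFfac.symm
  have hfG : fC = G := by
    have h := eq_zero_of_Eh_eq_zero (hfC.sub hG) (by rw [map_sub, hEG, ← hF_def, sub_self])
    exact sub_eq_zero.mp h
  -- evaluate at (1,0)
  have heval10 : (c : ℂ) = F.leadingCoeff * 0 ^ k := by
    have h1 : MvPolynomial.eval (fun i : Fin 2 => if i = 0 then (1:ℂ) else 0) fC = (c : ℂ) := by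
      have heq : (fun i : Fin 2 => if i = 0 then (1:ℂ) else 0) =
          (fun i : Fin 2 => (((fun j : Fin 2 => if j = 0 then (1:ℝ) else 0) i : ℝ) : ℂ)) := by
        funext i; by_cases h : i = 0 <;> simp [h]
      rw [heq, eval_coe, ← hc_def]
    rw [hfG] at h1
    rw [hG_def] at h1
    rw [map_mul, map_mul, map_pow, MvPolynomial.eval_C, MvPolynomial.eval_X] at h1
    simp only [if_neg (by decide : ¬ (1 : Fin 2) = 0)] at h1
    rw [map_multiset_prod, Multiset.map_map] at h1
    have h2 : (F.roots.map ((MvPolynomial.eval (fun i : Fin 2 => if i = 0 then (1:ℂ) else 0)) ∘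
        (fun a => X 0 - C a * X 1))).prod = 1 := by
      have : ∀ a ∈ F.roots, ((MvPolynomial.eval (fun i : Fin 2 => if i = 0 then (1:ℂ) else 0)) ∘
          (fun a => X 0 - C a * X 1)) a = 1 := by
        intro a _
        simp
      rw [Multiset.map_congr rfl this]
      simp
    rw [h2, mul_one] at h1
    exact h1.symm
  have hk0 : k = 0 := by
    by_contra hk
    rw [zero_pow hk, mul_zero] at heval10
    rw [Complex.ofReal_eq_zero] at heval10
    exact hc.ne' heval10
  have hlc : F.leadingCoeff = (c : ℂ) := by
    rw [heval10, hk0, pow_zero, mul_one]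
  have hndeg : F.natDegree = 2 * d := by omega
  -- clean factorization over the root multiset
  have hfac : fC = C (c : ℂ) * (F.roots.map (fun a => X 0 - C a * X 1)).prod := by
    rw [hfG, hG_def, hk0, pow_zero, one_mul, hlc]
  -- roots are distinct
  have hnodup : F.roots.Nodup := by
    rw [Multiset.nodup_iff_count_le_one]
    intro a
    by_contra h
    push_neg at h
    have h2 : 2 ≤ Multiset.count a F.roots := h
    have hrep : Multiset.replicate 2 a ≤ F.roots := by
      rw [← Multiset.le_count_iff_replicate_le]; exact h2
    have hdvd : ((Multiset.replicate 2 a).map (fun b => (X 0 : MvPolynomial (Fin 2) ℂ) - C b * X 1)).prod ∣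
        (F.roots.map (fun b => X 0 - C b * X 1)).prod :=
      Multiset.prod_dvd_prod_of_le (Multiset.map_le_map hrep)
    rw [Multiset.map_replicate, Multiset.prod_replicate] at hdvd
    have hdvd2 : ((X 0 : MvPolynomial (Fin 2) ℂ) - C a * X 1) ^ 2 ∣ fC := by
      refine hdvd.trans ?_
      exact ⟨C (c:ℂ), by rw [hfac]; ring⟩
    have hunit : IsUnit ((X 0 : MvPolynomial (Fin 2) ℂ) - C a * X 1) := by
      apply hsqfree
      rw [← sq]
      exact hdvd2
    have := hunit.map (MvPolynomial.eval (fun i : Fin 2 => if i = 0 then a else 1))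
    rw [map_sub, map_mul, MvPolynomial.eval_C, MvPolynomial.eval_X, MvPolynomial.eval_X] at this
    simp at this
  -- roots are closed under conjugation
  have hconjF : F.map (starRingEnd ℂ) = F := by
    have : (Polynomial.mapRingHom (starRingEnd ℂ)).comp
        (Eh.comp (MvPolynomial.map (algebraMap ℝ ℂ))) =
        Eh.comp (MvPolynomial.map (algebraMap ℝ ℂ)) := by
      apply MvPolynomial.ringHom_ext
      · intro r
        simp [Eh, Complex.conj_ofReal]
      · intro i
        by_cases h : i = 0 <;> simp [Eh, h]
    exact RingHom.congr_fun this f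
  have hroots_conj : F.roots.map (starRingEnd ℂ) = F.roots := by
    rw [← hsplits.roots_map, hconjF]
  have hmem_conj : ∀ a ∈ F.roots, (starRingEnd ℂ) a ∈ F.roots := by
    intro a ha
    rw [← hroots_conj]
    exact Multiset.mem_map_of_mem _ ha
  -- no real roots
  have him : ∀ a ∈ F.roots, a.im ≠ 0 := by
    intro a ha haim
    have h0 : F.eval a = 0 := (Polynomial.mem_roots'.mp ha).2
    rw [hF_def, evalE] at h0
    have heq : (fun i : Fin 2 => if i = 0 then a else 1) =
        fun i : Fin 2 => (((fun j : Fin 2 => if j = 0 then a.re else 1) i : ℝ) : ℂ) := by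
      funext i
      by_cases h : i = 0
      · simp only [h, if_true]
        exact Complex.ext (by simp) (by simp [haim])
      · simp [h]
    rw [heq, eval_coe] at h0
    rw [Complex.ofReal_eq_zero] at h0
    have hp1 : 0 < MvPolynomial.eval (fun j : Fin 2 => if j = 0 then a.re else 1) f := hpos _ (by
      intro h
      have := congrFun h 1
      simp at this)
    exact hp1.ne' h0
  -- split the roots into conjugate pairs
  classical
  set Rf : Finset ℂ := F.roots.toFinset with hRf_def
  have hRval : Rf.val = F.roots := hnodup.dedup
  have hmemRf : ∀ a, a ∈ Rf ↔ a ∈ F.roots := by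
    intro a
    rw [← hRval]
    rfl
  set Rp : Finset ℂ := Rf.filter (fun z => 0 < z.im) with hRp_def
  set Rm : Finset ℂ := Rf.filter (fun z => z.im < 0) with hRm_def
  have hdisj : Disjoint Rp Rm := by
    rw [Finset.disjoint_left]
    intro z hz1 hz2
    rw [hRp_def, Finset.mem_filter] at hz1
    rw [hRm_def, Finset.mem_filter] at hz2
    linarith [hz1.2, hz2.2]
  have hunion : Rf = Rp.disjUnion Rm hdisj := by
    ext z
    rw [Finset.disjUnion_eq_union, Finset.mem_union, hRp_def, hRm_def,
      Finset.mem_filter, Finset.mem_filter]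
    constructor
    · intro hz
      rcases lt_trichotomy z.im 0 with h | h | h
      · exact Or.inr ⟨hz, h⟩
      · exact absurd h (him z ((hmemRf z).mp hz))
      · exact Or.inl ⟨hz, h⟩
    · rintro (⟨h, _⟩ | ⟨h, _⟩) <;> exact h
  have himage : Rp.image (starRingEnd ℂ) = Rm := by
    ext z
    rw [Finset.mem_image]
    constructor
    · rintro ⟨w, hw, rfl⟩
      rw [hRp_def, Finset.mem_filter] at hw
      rw [hRm_def, Finset.mem_filter]
      refine ⟨(hmemRf _).mpr (hmem_conj _ ((hmemRf _).mp hw.1)), ?_⟩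
      rw [Complex.conj_im]
      linarith [hw.2]
    · intro hz
      rw [hRm_def, Finset.mem_filter] at hz
      refine ⟨(starRingEnd ℂ) z, ?_, Complex.conj_conj z⟩
      rw [hRp_def, Finset.mem_filter]
      refine ⟨(hmemRf _).mpr (hmem_conj _ ((hmemRf _).mp hz.1)), ?_⟩
      rw [Complex.conj_im]
      linarith [hz.2]
  have hconj_inj : Function.Injective (starRingEnd ℂ) := (starRingEnd ℂ).injective
  have hcardRf : Rf.card = 2 * d := by
    have : Rf.card = Multiset.card F.roots := by
      rw [Finset.card_def, hRval]
    rw [this, hcard, hndeg]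
  have hcardp : Rp.card = d := by
    have h1 : Rf.card = Rp.card + Rm.card := by
      rw [hunion, Finset.card_disjUnion]
    have h2 : Rm.card = Rp.card := by
      rw [← himage, Finset.card_image_of_injective _ hconj_inj]
    omega
  -- enumerate the upper-half-plane roots
  have hcardp' : Fintype.card {x // x ∈ Rp} = d := by
    rw [Fintype.card_coe]
    exact hcardp
  set equiv : {x // x ∈ Rp} ≃ Fin d := Fintype.equivFinOfCardEq hcardp' with hequiv_def
  set r : Fin d → ℂ := fun i => ((equiv.symm i : {x // x ∈ Rp}) : ℂ) with hr_def
  have hrinj : Function.Injective r := by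
    intro i j hij
    have : (equiv.symm i : {x // x ∈ Rp}) = equiv.symm j := Subtype.ext hij
    exact equiv.symm.injective this
  have hrmem : ∀ i, r i ∈ Rp := fun i => (equiv.symm i).2
  have hrim : ∀ i, 0 < (r i).im := by
    intro i
    have := hrmem i
    rw [hRp_def, Finset.mem_filter] at this
    exact this.2
  have himg : Finset.image r Finset.univ = Rp := by
    ext z
    rw [Finset.mem_image]
    constructor
    · rintro ⟨i, _, rfl⟩
      exact hrmem i
    · intro hz
      exact ⟨equiv ⟨z, hz⟩, Finset.mem_univ _, by rw [hr_def]; simp⟩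
  have h1 : Rp.val = Multiset.map r Finset.univ.val := by
    rw [← Finset.image_val_of_injOn (hrinj.injOn), himg]
  have h2 : Rm.val = Multiset.map (fun i => (starRingEnd ℂ) (r i)) Finset.univ.val := by
    have e1 : Rm = Finset.image (fun i => (starRingEnd ℂ) (r i)) Finset.univ := by
      rw [← himage, ← himg, Finset.image_image]
      rfl
    rw [e1, Finset.image_val_of_injOn (f := fun i => (starRingEnd ℂ) (r i))
      (by exact (hconj_inj.comp hrinj).injOn)]
  have hroots_eq : F.roots = Multiset.map r Finset.univ.val +
      Multiset.map (fun i => (starRingEnd ℂ) (r i)) Finset.univ.val := by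
    rw [← hRval, hunion, show (Rp.disjUnion Rm hdisj).val = Rp.val + Rm.val from rfl, h1, h2]
  -- assemble
  refine ⟨Real.sqrt c, r, Real.sqrt_pos.mpr hc, hrinj, hrim, ?_⟩
  have hee : ((Real.sqrt c : ℝ) : ℂ) * ((Real.sqrt c : ℝ) : ℂ) = (c : ℂ) := by
    rw [← Complex.ofReal_mul, Real.mul_self_sqrt hc.le]
  rw [hee, hfac, hroots_eq, Multiset.map_add, Multiset.prod_add]
  congr 1
  rw [Multiset.map_map, Multiset.map_map]
  rw [Finset.prod_mul_distrib]
  congr 1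

lemma homog_mem_span {p : MvPolynomial (Fin 2) ℂ} {n : ℕ} (hp : p.IsHomogeneous n) :
    p ∈ Submodule.span ℂ (Set.range (fun a : Fin (n + 1) =>
      (X 0 : MvPolynomial (Fin 2) ℂ) ^ (a : ℕ) * X 1 ^ (n - (a : ℕ)))) := by
  nth_rewrite 1 [p.as_sum]
  apply Submodule.sum_mem
  intro m hm
  have hsum : m 0 + m 1 = n := homog_sum_eq hp hm
  have hmon : (monomial m (MvPolynomial.coeff m p) : MvPolynomial (Fin 2) ℂ)
      = MvPolynomial.coeff m p • ((X 0 : MvPolynomial (Fin 2) ℂ) ^ (m 0) * X 1 ^ (m 1)) := by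
    rw [MvPolynomial.monomial_eq, Finsupp.prod_fintype _ _ (fun i => pow_zero _),
      Fin.prod_univ_two, MvPolynomial.smul_eq_C_mul]
  rw [hmon]
  apply Submodule.smul_mem
  apply Submodule.subset_span
  refine ⟨⟨m 0, by omega⟩, ?_⟩
  simp only [Fin.val_mk]
  have h2 : n - m 0 = m 1 := by omega
  rw [h2]

/-- Let `f ∈ ℝ[x,y]_{2d}` be a positive binary form with distinct roots.  For
each `2 ≤ s ≤ 2^d` there exist `s` (pairwise distinct, i.e. pairwise non-proportional)
rank-one tensors `p k ⊗ conj (p k)` in `H⁺(f)` whose sum has rank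
`dim_ℂ span(p 1, …, p s) ≤ ⌈log₂ s⌉ + 1`. -/
theorem exists_rank_one_tensors_small_rank_sum
    (d s : ℕ) (f : MvPolynomial (Fin 2) ℝ)
    (hf : f.IsHomogeneous (2 * d))
    (hpos : ∀ v : Fin 2 → ℝ, v ≠ 0 → 0 < MvPolynomial.eval v f)
    (hsqfree : Squarefree (MvPolynomial.map (algebraMap ℝ ℂ) f))
    (hs2 : 2 ≤ s) (hs : s ≤ 2 ^ d) :
    ∃ p : Fin s → MvPolynomial (Fin 2) ℂ,
      (∀ k, (p k).IsHomogeneous d) ∧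
      (∀ k, p k * conjP (p k) = MvPolynomial.map (algebraMap ℝ ℂ) f) ∧
      (∀ k l, k ≠ l → ∀ c : ℂ, p k ≠ c • p l) ∧
      Module.finrank ℂ (Submodule.span ℂ (Set.range p)) ≤ Nat.clog 2 s + 1 := by
  classical
  obtain ⟨e, r, he, hrinj, hrim, hfac⟩ := master d f hf hpos hsqfree
  set t := Nat.clog 2 s with ht_def
  have htd : t ≤ d := (Nat.clog_le_iff_le_pow one_lt_two).mpr hs
  have hst : s ≤ 2 ^ t := Nat.le_pow_clog one_lt_two s
  obtain ⟨σ⟩ : Nonempty (Fin s ↪ (Fin t → Bool)) := by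
    rw [Function.Embedding.nonempty_iff_card_le]
    simpa [Fintype.card_fun] using hst
  set τ : Fin s → Fin d → Bool :=
    fun k i => if h : (i : ℕ) < t then σ k ⟨i, h⟩ else false with hτ_def
  set A : Fin s → Fin d → MvPolynomial (Fin 2) ℂ :=
    fun k i => X 0 - C (if τ k i then r i else (starRingEnd ℂ) (r i)) * X 1 with hA_def
  set p : Fin s → MvPolynomial (Fin 2) ℂ := fun k => C (e : ℂ) * ∏ i : Fin d, A k i with hp_def
  -- homogeneity
  have hhomA : ∀ k i, (A k i).IsHomogeneous 1 := fun k i =>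
    (MvPolynomial.isHomogeneous_X ℂ 0).sub (MvPolynomial.isHomogeneous_C_mul_X _ 1)
  have hhom : ∀ k, (p k).IsHomogeneous d := by
    intro k
    have h := (MvPolynomial.IsHomogeneous.prod Finset.univ (A k) (fun _ => 1)
      (fun i _ => hhomA k i)).C_mul (e : ℂ)
    simpa using h
  -- the product identity
  have hconjA : ∀ k i, MvPolynomial.map (starRingEnd ℂ) (A k i) =
      X 0 - C (if τ k i then (starRingEnd ℂ) (r i) else r i) * X 1 := by
    intro k i
    simp only [hA_def, map_sub, map_mul, MvPolynomial.map_C, MvPolynomial.map_X]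
    cases hb : τ k i <;> simp [hb]
  have hpair : ∀ k i, A k i * MvPolynomial.map (starRingEnd ℂ) (A k i) =
      (X 0 - C (r i) * X 1) * (X 0 - C ((starRingEnd ℂ) (r i)) * X 1) := by
    intro k i
    rw [hconjA]
    simp only [hA_def]
    cases hb : τ k i
    · simp only [hb, Bool.false_eq_true, if_false]
      ring
    · simp only [hb, if_true]
  have hprod : ∀ k, p k * conjP (p k) = MvPolynomial.map (algebraMap ℝ ℂ) f := by
    intro k
    rw [hfac]
    simp only [hp_def, conjP]
    rw [map_mul (MvPolynomial.map (starRingEnd ℂ)), MvPolynomial.map_C,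
      map_prod (MvPolynomial.map (starRingEnd ℂ)), Complex.conj_ofReal,
      mul_mul_mul_comm, ← Finset.prod_mul_distrib,
      Finset.prod_congr rfl (fun i _ => hpair k i), ← MvPolynomial.C_mul]
  -- nonvanishing
  have hfC0 : (MvPolynomial.map (algebraMap ℝ ℂ) f) ≠ 0 := by
    intro h
    have h1 := eval_coe f (fun _ => 1)
    rw [h, map_zero] at h1
    have h2 : 0 < MvPolynomial.eval (fun _ : Fin 2 => (1:ℝ)) f := hpos _ (by
      intro hh
      simpa using congrFun hh 0)
    exact (Complex.ofReal_ne_zero.mpr h2.ne') h1.symm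
  have hp0 : ∀ k, p k ≠ 0 := by
    intro k hk
    apply hfC0
    rw [← hprod k, hk, zero_mul]
  -- evaluation at conjugate roots
  set w : Fin d → (Fin 2 → ℂ) := fun i m => if m = 0 then (starRingEnd ℂ) (r i) else 1 with hw_def
  have hAeval : ∀ k i i', MvPolynomial.eval (w i) (A k i') =
      (starRingEnd ℂ) (r i) - (if τ k i' then r i' else (starRingEnd ℂ) (r i')) := by
    intro k i i'
    simp [hA_def, hw_def]
  have hpzero : ∀ k i, τ k i = false → MvPolynomial.eval (w i) (p k) = 0 := by
    intro k i hb
    simp only [hp_def, map_mul, map_prod]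
    have hz : MvPolynomial.eval (w i) (A k i) = 0 := by
      rw [hAeval, hb]
      simp
    rw [Finset.prod_eq_zero (Finset.mem_univ i) hz, mul_zero]
  have hpne : ∀ k i, τ k i = true → MvPolynomial.eval (w i) (p k) ≠ 0 := by
    intro k i hb
    simp only [hp_def, map_mul, map_prod, MvPolynomial.eval_C]
    apply mul_ne_zero (Complex.ofReal_ne_zero.mpr he.ne')
    rw [Finset.prod_ne_zero_iff]
    intro i' _
    rw [hAeval, sub_ne_zero]
    cases hb' : τ k i'
    · simp only [hb', Bool.false_eq_true, if_false]
      intro hcontra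
      have hii : i ≠ i' := by
        intro hii
        rw [hii] at hb
        rw [hb] at hb'
        exact Bool.noConfusion hb'
      exact hii (hrinj ((starRingEnd ℂ).injective hcontra))
    · simp only [hb', if_true]
      intro hcontra
      have h1 := congrArg Complex.im hcontra
      rw [Complex.conj_im] at h1
      linarith [hrim i, hrim i']
  -- pairwise non-proportional
  have hnonprop : ∀ k l, k ≠ l → ∀ cc : ℂ, p k ≠ cc • p l := by
    intro k l hkl cc hEq
    have hσ : σ k ≠ σ l := fun h => hkl (σ.injective h)
    obtain ⟨j, hj⟩ := Function.ne_iff.mp hσ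
    set i : Fin d := ⟨(j : ℕ), lt_of_lt_of_le j.2 htd⟩ with hi_def
    have hτk : τ k i = σ k j := by
      simp only [hτ_def]
      rw [dif_pos (show ((i : Fin d) : ℕ) < t from j.2)]
    have hτl : τ l i = σ l j := by
      simp only [hτ_def]
      rw [dif_pos (show ((i : Fin d) : ℕ) < t from j.2)]
    have heval : MvPolynomial.eval (w i) (p k) = cc * MvPolynomial.eval (w i) (p l) := by
      rw [hEq, MvPolynomial.smul_eq_C_mul, map_mul, MvPolynomial.eval_C]
    cases hbk : σ k j
    · have hbl : σ l j = true := by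
        cases hbl : σ l j
        · rw [hbk, hbl] at hj
          exact absurd rfl hj
        · rfl
      have h1 : MvPolynomial.eval (w i) (p k) = 0 := hpzero k i (by rw [hτk, hbk])
      have h2 : MvPolynomial.eval (w i) (p l) ≠ 0 := hpne l i (by rw [hτl, hbl])
      rw [h1] at heval
      rcases mul_eq_zero.mp heval.symm with hcc | hcc
      · rw [hcc, zero_smul] at hEq
        exact hp0 k hEq
      · exact h2 hcc
    · have hbl : σ l j = false := by
        cases hbl : σ l j
        · rfl
        · rw [hbk, hbl] at hj
          exact absurd rfl hj
      have h1 : MvPolynomial.eval (w i) (p k) ≠ 0 := hpne k i (by rw [hτk, hbk])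
      have h2 : MvPolynomial.eval (w i) (p l) = 0 := hpzero l i (by rw [hτl, hbl])
      rw [h2, mul_zero] at heval
      exact h1 heval
  -- the span bound
  set S1 : Finset (Fin d) := Finset.univ.filter (fun i => (i : ℕ) < t) with hS1
  have hcardS1 : S1.card = t := by
    have himg : S1 = Finset.image (Fin.castLE htd) Finset.univ := by
      ext x
      simp only [hS1, Finset.mem_filter, Finset.mem_univ, true_and, Finset.mem_image]
      constructor
      · intro hx
        exact ⟨⟨(x : ℕ), hx⟩, rfl⟩
      · rintro ⟨j, rfl⟩
        exact j.2
    rw [himg, Finset.card_image_of_injective _ (Fin.castLE_injective htd),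
      Finset.card_univ, Fintype.card_fin]
  set q : MvPolynomial (Fin 2) ℂ :=
    C (e : ℂ) * ∏ i ∈ S1ᶜ, (X 0 - C ((starRingEnd ℂ) (r i)) * X 1) with hq
  have hdecomp : ∀ k, p k = q * ∏ i ∈ S1, A k i := by
    intro k
    simp only [hp_def, hq]
    rw [← Finset.prod_mul_prod_compl S1 (A k)]
    have hcongr : ∀ i ∈ S1ᶜ, A k i = X 0 - C ((starRingEnd ℂ) (r i)) * X 1 := by
      intro i hi
      have hni : ¬ ((i : ℕ) < t) := by
        simpa [hS1] using Finset.mem_compl.mp hi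
      simp only [hA_def, hτ_def, dif_neg hni, Bool.false_eq_true, if_false]
    rw [Finset.prod_congr rfl hcongr]
    ring
  set g : Fin (t + 1) → MvPolynomial (Fin 2) ℂ :=
    fun a => q * ((X 0) ^ (a : ℕ) * (X 1) ^ (t - (a : ℕ))) with hg
  have hrange : Set.range p ⊆ (Submodule.span ℂ (Set.range g) : Set (MvPolynomial (Fin 2) ℂ)) := by
    rintro _ ⟨k, rfl⟩
    rw [SetLike.mem_coe, hdecomp k]
    have hwk : (∏ i ∈ S1, A k i).IsHomogeneous t := by
      have h := MvPolynomial.IsHomogeneous.prod S1 (A k) (fun _ => 1) (fun i _ => hhomA k i)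
      simpa [hcardS1] using h
    have hmem := homog_mem_span hwk
    have hmap : q * (∏ i ∈ S1, A k i) ∈ Submodule.map (LinearMap.mulLeft ℂ q)
        (Submodule.span ℂ (Set.range fun a : Fin (t + 1) =>
          (X 0 : MvPolynomial (Fin 2) ℂ) ^ (a : ℕ) * X 1 ^ (t - (a : ℕ)))) := ⟨_, hmem, rfl⟩
    rw [Submodule.map_span] at hmap
    refine Submodule.span_mono ?_ hmap
    rintro _ ⟨_, ⟨a, rfl⟩, rfl⟩
    exact ⟨a, rfl⟩
  refine ⟨p, hhom, hprod, hnonprop, ?_⟩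
  have hspan_le : Submodule.span ℂ (Set.range p) ≤ Submodule.span ℂ (Set.range g) :=
    Submodule.span_le.mpr hrange
  have hfd : FiniteDimensional ℂ (Submodule.span ℂ (Set.range g)) :=
    FiniteDimensional.span_of_finite ℂ (Set.finite_range g)
  refine (Submodule.finrank_mono hspan_le).trans ?_
  refine (finrank_span_le_card (Set.range g)).trans ?_
  rw [Set.toFinset_range]
  exact (Finset.card_image_le).trans (by rw [Finset.card_univ, Fintype.card_fin])
end

section
/- Let U ⊆ ℂ[x]_{≤d} be a k-dimensional subspace with k ≤ d. Then there exist scalars λ₁, …, λ_k ∈ ℂ and a basis p₁, …, p_k of U such that p_l(λ_l) ≠ 0 and p_j(λ_l) = 0 for all j > l. In particular, the only element of U vanishing at all of λ₁, …, λ_k is 0. -/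
open Polynomial

lemma exists_eval_ne_zero_aux {q : ℂ[X]} (hq : q ≠ 0) : ∃ x : ℂ, q.eval x ≠ 0 := by
  have hfin : {x : ℂ | q.IsRoot x}.Finite := Polynomial.finite_setOf_isRoot hq
  obtain ⟨x, hx⟩ := hfin.infinite_compl.nonempty
  exact ⟨x, hx⟩

lemma triangular_basis_aux (k : ℕ) :
    ∀ (U : Submodule ℂ (Polynomial ℂ)), FiniteDimensional ℂ U →
      Module.finrank ℂ U = k →
    ∃ (lam : Fin k → ℂ) (p : Fin k → Polynomial ℂ),
      (∀ i, p i ∈ U) ∧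
      LinearIndependent ℂ p ∧
      Submodule.span ℂ (Set.range p) = U ∧
      (∀ l, Polynomial.eval (lam l) (p l) ≠ 0) ∧
      (∀ l j, l < j → Polynomial.eval (lam l) (p j) = 0) ∧
      (∀ q ∈ U, (∀ l, Polynomial.eval (lam l) q = 0) → q = 0) := by
  induction k with
  | zero =>
    intro U hfd hdim
    have hU : U = ⊥ := Submodule.finrank_eq_zero.mp hdim
    refine ⟨Fin.elim0, Fin.elim0, fun i => i.elim0, linearIndependent_empty_type, ?_,
      fun i => i.elim0, fun l => l.elim0, ?_⟩
    · simp [Set.range_eq_empty, hU, Submodule.span_empty]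
    · intro q hq _
      simpa [hU] using hq
  | succ k ih =>
    intro U hfd hdim
    have hUne : U ≠ ⊥ := by
      intro h
      rw [h, finrank_bot] at hdim
      omega
    obtain ⟨q₀, hq₀U, hq₀ne⟩ := Submodule.exists_mem_ne_zero_of_ne_bot hUne
    obtain ⟨lam0, hlam0⟩ := exists_eval_ne_zero_aux hq₀ne
    set f : U →ₗ[ℂ] ℂ := (Polynomial.leval lam0).comp U.subtype with hf
    have hfq₀ : f ⟨q₀, hq₀U⟩ = q₀.eval lam0 := rfl
    have hrange : LinearMap.range f = ⊤ := by
      rcases eq_bot_or_eq_top (LinearMap.range f) with h | h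
      · exfalso
        apply hlam0
        have : f ⟨q₀, hq₀U⟩ ∈ LinearMap.range f := LinearMap.mem_range_self f _
        rw [h] at this
        simpa [hfq₀] using this
      · exact h
    have hker : Module.finrank ℂ (LinearMap.ker f) = k := by
      have h1 := LinearMap.finrank_range_add_finrank_ker f
      rw [hrange, finrank_top] at h1
      simp only [Module.finrank_self] at h1
      omega
    set U' : Submodule ℂ (Polynomial ℂ) := Submodule.map U.subtype (LinearMap.ker f) with hU'
    have hU'mem : ∀ x, x ∈ U' ↔ x ∈ U ∧ Polynomial.eval lam0 x = 0 := by
      intro x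
      constructor
      · rintro ⟨⟨y, hyU⟩, hyk, rfl⟩
        exact ⟨hyU, hyk⟩
      · rintro ⟨hxU, hxe⟩
        exact ⟨⟨x, hxU⟩, hxe, rfl⟩
    have hU'fd : FiniteDimensional ℂ U' := by
      rw [hU']
      infer_instance
    have hU'dim : Module.finrank ℂ U' = k := by
      rw [hU', Submodule.finrank_map_subtype_eq]
      exact hker
    obtain ⟨lam', p', hmem', hli', hspan', hdiag', htri', hvanish'⟩ := ih U' hU'fd hU'dim
    have hmem'U : ∀ i, p' i ∈ U := fun i => ((hU'mem _).mp (hmem' i)).1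
    have heval' : ∀ i, Polynomial.eval lam0 (p' i) = 0 := fun i => ((hU'mem _).mp (hmem' i)).2
    refine ⟨Fin.cons lam0 lam', Fin.cons q₀ p', ?_, ?_, ?_, ?_, ?_, ?_⟩
    · intro i
      refine Fin.cases ?_ ?_ i
      · exact hq₀U
      · intro j; simpa using hmem'U j
    · refine linearIndependent_fin_cons.mpr ⟨hli', ?_⟩
      rw [hspan']
      intro hq₀U'
      exact hlam0 ((hU'mem _).mp hq₀U').2
    · apply le_antisymm
      · rw [Submodule.span_le]
        rintro x ⟨i, rfl⟩
        refine Fin.cases hq₀U (fun j => hmem'U j) i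
      · have hspan_rank : Module.finrank ℂ (Submodule.span ℂ (Set.range (Fin.cons q₀ p' : Fin (k+1) → Polynomial ℂ))) = k + 1 := by
          have := finrank_span_eq_card (R := ℂ)
            (linearIndependent_fin_cons.mpr ⟨hli', by
              rw [hspan']
              intro hq₀U'
              exact hlam0 ((hU'mem _).mp hq₀U').2⟩)
          simpa using this
        have hle : Submodule.span ℂ (Set.range (Fin.cons q₀ p' : Fin (k+1) → Polynomial ℂ)) ≤ U := by
          rw [Submodule.span_le]
          rintro x ⟨i, rfl⟩
          refine Fin.cases hq₀U (fun j => hmem'U j) i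
        exact (Submodule.eq_of_le_of_finrank_le hle (by rw [hspan_rank, hdim])).ge
    · intro l
      refine Fin.cases ?_ ?_ l
      · simpa using hlam0
      · intro j; simpa using hdiag' j
    · intro l j hlj
      refine Fin.cases (motive := fun l => l < j → Polynomial.eval ((Fin.cons lam0 lam' : Fin (k+1) → ℂ) l) ((Fin.cons q₀ p' : Fin (k+1) → Polynomial ℂ) j) = 0) ?_ ?_ l hlj
      · intro hj
        have : j ≠ 0 := by
          intro h; rw [h] at hj; exact absurd hj (lt_irrefl _)
        obtain ⟨j', rfl⟩ := Fin.eq_succ_of_ne_zero this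
        simpa using heval' j'
      · intro l' hl'j
        have : j ≠ 0 := by
          intro h; rw [h] at hl'j; exact absurd hl'j (Fin.not_lt_zero _ : ¬ _ < (0 : Fin (k+1)))
        obtain ⟨j', rfl⟩ := Fin.eq_succ_of_ne_zero this
        have : l' < j' := by
          simpa [Fin.succ_lt_succ_iff] using hl'j
        simpa using htri' l' j' this
    · intro q hqU hq
      have h0 : Polynomial.eval lam0 q = 0 := by simpa using hq 0
      have hqU' : q ∈ U' := (hU'mem q).mpr ⟨hqU, h0⟩
      exact hvanish' q hqU' fun l => by simpa using hq l.succ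

/-- Let `U ⊆ ℂ[x]_{≤ d}` be a `k`-dimensional subspace, `k ≤ d`.  Then there
exist scalars `λ 0, …, λ (k-1) ∈ ℂ` and a basis `p 0, …, p (k-1)` of `U` such that
`p l (λ l) ≠ 0` and `p j (λ l) = 0` for all `j > l`.  In particular, the only element of `U`
vanishing at all of the `λ l` is `0`. -/
theorem exists_triangular_basis
    (d k : ℕ) (hk : k ≤ d) (U : Submodule ℂ (Polynomial ℂ))
    (hUle : U ≤ Polynomial.degreeLE ℂ (d : ℕ))
    (hdim : Module.finrank ℂ U = k) :
    ∃ (lam : Fin k → ℂ) (p : Fin k → Polynomial ℂ),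
      (∀ i, p i ∈ U) ∧
      LinearIndependent ℂ p ∧
      Submodule.span ℂ (Set.range p) = U ∧
      (∀ l, Polynomial.eval (lam l) (p l) ≠ 0) ∧
      (∀ l j, l < j → Polynomial.eval (lam l) (p j) = 0) ∧
      (∀ q ∈ U, (∀ l, Polynomial.eval (lam l) q = 0) → q = 0) := by
  have hfdLE : FiniteDimensional ℂ (Polynomial.degreeLE ℂ (d : ℕ)) := by
    rw [← Polynomial.degreeLT_succ_eq_degreeLE]
    exact Module.Finite.equiv (Polynomial.degreeLTEquiv ℂ (d + 1)).symm
  have hfd : FiniteDimensional ℂ U := Submodule.finiteDimensional_of_le hUle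
  exact triangular_basis_aux k U hfd hdim
end

section
/- Let U ⊆ ℂ[x]_{≤d} be a k-dimensional subspace with k ≤ d. Then there exist λ₁, …, λ_k ∈ ℂ such that: whenever p ∈ U vanishes at all λ_j, or p vanishes at all conjugates conj(λ_j), then p = 0. -/
lemma aux_detect : ∀ (k : ℕ) (W : Submodule ℂ (Polynomial ℂ)), FiniteDimensional ℂ W →
    Module.finrank ℂ W = k →
    ∃ lam : Fin k → ℝ, ∀ p ∈ W, (∀ j, Polynomial.eval ((lam j : ℂ)) p = 0) → p = 0 := by
  intro k
  induction k with
  | zero =>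
    intro W hW h0
    refine ⟨fun j => 0, ?_⟩
    intro p hp _
    have : W = ⊥ := Submodule.finrank_eq_zero.mp h0
    simpa [this] using hp
  | succ k ih =>
    intro W hW hdim
    -- W is nonzero
    have hWne : W ≠ ⊥ := by
      intro h
      rw [h] at hdim
      simp at hdim
    obtain ⟨p0, hp0W, hp0⟩ := Submodule.exists_mem_ne_zero_of_ne_bot hWne
    -- find real x with p0.eval x ≠ 0
    have hroots : {x : ℝ | Polynomial.eval ((x : ℂ)) p0 = 0}.Finite := by
      have h1 : {z : ℂ | Polynomial.eval z p0 = 0}.Finite := Polynomial.finite_setOf_isRoot hp0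
      exact (h1.preimage (Complex.ofReal_injective.injOn))
    obtain ⟨x, hx⟩ := hroots.infinite_compl.nonempty
    simp only [Set.mem_compl_iff, Set.mem_setOf_eq] at hx
    -- the evaluation linear map
    set E : Polynomial ℂ →ₗ[ℂ] ℂ := (Polynomial.aeval (x : ℂ)).toLinearMap with hE
    have hEeval : ∀ q : Polynomial ℂ, E q = Polynomial.eval ((x : ℂ)) q := by
      intro q; simp [hE, Polynomial.aeval_def]
    set W' : Submodule ℂ (Polynomial ℂ) := W ⊓ LinearMap.ker E with hW'
    have hW'le : W' ≤ W := inf_le_left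
    have : FiniteDimensional ℂ W' := Submodule.finiteDimensional_of_le hW'le
    set f : W →ₗ[ℂ] ℂ := E.domRestrict W with hf
    have hker : (LinearMap.ker f).map W.subtype = W' := by
      ext q
      constructor
      · rintro ⟨⟨r, hrW⟩, hrk, rfl⟩
        exact ⟨hrW, by simpa [hf] using hrk⟩
      · rintro ⟨hqW, hqE⟩
        exact ⟨⟨q, hqW⟩, by simpa [hf] using hqE, rfl⟩
    have hne : f ⟨p0, hp0W⟩ ≠ 0 := by
      simpa [hf, hEeval] using hx
    have hrpos : 0 < Module.finrank ℂ (LinearMap.range f) := by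
      rw [Module.finrank_pos_iff]
      refine Submodule.nontrivial_iff_ne_bot.mpr ?_
      intro h
      apply hne
      have : f ⟨p0, hp0W⟩ ∈ LinearMap.range f := ⟨_, rfl⟩
      rw [h] at this; simpa using this
    have hrle : Module.finrank ℂ (LinearMap.range f) ≤ 1 := by
      simpa using (LinearMap.range f).finrank_le
    have hsum := f.finrank_range_add_finrank_ker
    rw [hdim] at hsum
    have hkerdim : Module.finrank ℂ (LinearMap.ker f) = k := by omega
    have hW'dim : Module.finrank ℂ W' = k := by
      rw [← hker, Submodule.finrank_map_subtype_eq, hkerdim]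
    obtain ⟨lam, hlam⟩ := ih W' ‹FiniteDimensional ℂ W'› hW'dim
    refine ⟨Fin.cons x lam, ?_⟩
    intro p hp hall
    have h0 : Polynomial.eval ((x : ℂ)) p = 0 := by simpa using hall 0
    have hpW' : p ∈ W' := ⟨hp, by simpa [LinearMap.mem_ker, hEeval] using h0⟩
    exact hlam p hpW' (fun j => by simpa using hall j.succ)

/-- Let `U ⊆ ℂ[x]_{≤ d}` be a `k`-dimensional subspace, `k ≤ d`.  Then there
exist `λ 0, …, λ (k-1) ∈ ℂ` such that whenever `p ∈ U` vanishes at all the `λ j`, or at all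
the conjugates `conj (λ j)`, then `p = 0`. -/
theorem exists_scalars_detecting_zero_with_conjugates
    (d k : ℕ) (hk : k ≤ d) (U : Submodule ℂ (Polynomial ℂ))
    (hUle : U ≤ Polynomial.degreeLE ℂ (d : ℕ))
    (hdim : Module.finrank ℂ U = k) :
    ∃ lam : Fin k → ℂ, ∀ p ∈ U,
      ((∀ j, Polynomial.eval (lam j) p = 0) ∨
       (∀ j, Polynomial.eval (starRingEnd ℂ (lam j)) p = 0)) → p = 0 := by
  have hfin : FiniteDimensional ℂ U := by
    have : FiniteDimensional ℂ (Polynomial.degreeLE ℂ (d : ℕ)) := by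
      rw [Polynomial.degreeLE_eq_span_X_pow]
      exact FiniteDimensional.span_finset _ _
    exact Submodule.finiteDimensional_of_le hUle
  obtain ⟨lam, hlam⟩ := aux_detect k U hfin hdim
  refine ⟨fun j => (lam j : ℂ), ?_⟩
  intro p hp h
  rcases h with h | h
  · exact hlam p hp h
  · exact hlam p hp (fun j => by simpa [Complex.conj_ofReal] using h j)
end
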